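/- arXiv:2407.15628 — 3 statements merged into one kernel-verified Lean document; each statement's English description precedes it below -/
import Mathlib

section
/- For all integers n ≥ 0, a_3(7n+4) ≡ 0 (mod 7), where a_3(n) is the number of generalized cubic partitions of n with even parts in 3 colors. -/
/-- `f m` is the infinite product `∏_{k ≥ 1} (1 - q^(m k))` as a formal power series in `q`
over `ℤ`, defined coefficientwise (the `n`-th coefficient of the partial product
`∏_{k=1}^{n+1} (1 - q^(m k))` is already stable). -/
noncomputable def f (m : ℕ) : PowerSeries ℤ :=
  PowerSeries.mk fun n => PowerSeries.coeff n
    (∏ k ∈ Finset.range (n + 1), (1 - (PowerSeries.X : PowerSeries ℤ) ^ (m * (k + 1))))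

namespace GCP
set_option maxHeartbeats 2000000
open Polynomial Finset

section Basic


/-- `∏_{k=a+1}^{b} (1 - X^k)` -/
noncomputable def Pp (R : Type*) [CommRing R] (a b : ℕ) : Polynomial R :=
  ∏ k ∈ Finset.Ioc a b, (1 - Polynomial.X ^ k)

variable {R : Type*} [CommRing R]

lemma Pp_split (a b c : ℕ) (hab : a ≤ b) (hbc : b ≤ c) :
    Pp R a c = Pp R a b * Pp R b c := by
  rw [Pp, Pp, Pp, Finset.prod_Ioc_consecutive _ hab hbc]

lemma Pp_eq_one (a b : ℕ) (h : b ≤ a) : Pp R a b = 1 := by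
  rw [Pp, Finset.Ioc_eq_empty (by omega), Finset.prod_empty]

lemma Pp_single (a : ℕ) : Pp R a (a + 1) = 1 - X ^ (a + 1) := by
  have : Finset.Ioc a (a + 1) = {a + 1} := by
    ext x; simp only [Finset.mem_Ioc, Finset.mem_singleton]; omega
  rw [Pp, this, Finset.prod_singleton]

lemma Pp_peel_bot (a b : ℕ) (h : a < b) :
    Pp R a b = (1 - X ^ (a + 1)) * Pp R (a + 1) b := by
  rw [Pp_split a (a+1) b (by omega) (by omega), Pp_single]

lemma Pp_peel_top (a b : ℕ) (h : a ≤ b) :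
    Pp R a (b + 1) = Pp R a b * (1 - X ^ (b + 1)) := by
  rw [Pp_split a b (b+1) h (by omega), Pp_single]

/-- coefficients of `Pp a b` below `a+1` are those of `1`. -/
lemma Pp_coeff_low (a b i : ℕ) (hi : i ≤ a) :
    (Pp R a b).coeff i = if i = 0 then 1 else 0 := by
  induction b with
  | zero => rw [Pp_eq_one _ _ (Nat.zero_le a)]; simp [Polynomial.coeff_one]
  | succ b ih =>
    rcases le_or_gt (b + 1) a with h | h
    · rw [Pp_eq_one _ _ h]; simp [Polynomial.coeff_one]
    · rw [Pp_peel_top a b (by omega)]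
      rw [mul_sub, mul_one, Polynomial.coeff_sub,
        Polynomial.coeff_mul_X_pow', if_neg (by omega), sub_zero, ih]

/-- triangular numbers indexed by ℤ -/
def Tz (j : ℤ) : ℕ := (j * (j + 1) / 2).toNat

lemma Tz_two_mul (j : ℤ) : 2 * (Tz j : ℤ) = j * (j + 1) := by
  have he : (2:ℤ) ∣ j * (j + 1) := (Int.even_mul_succ_self j).two_dvd
  have hn : 0 ≤ j * (j + 1) := by
    rcases le_or_gt 0 j with h | h
    · positivity
    · have h1 : (0:ℤ) ≤ (-j) * (-(j+1)) := mul_nonneg (by omega) (by omega)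
      nlinarith [h1]
  rw [Tz, Int.toNat_of_nonneg (Int.ediv_nonneg hn (by norm_num))]
  exact Int.mul_ediv_cancel' he

lemma Tz_neg (j : ℤ) : Tz (-j - 1) = Tz j := by
  have h1 := Tz_two_mul (-j - 1)
  have h2 := Tz_two_mul j
  have : (Tz (-j-1) : ℤ) = Tz j := by nlinarith [h1, h2]
  exact_mod_cast this

lemma Tz_natCast (n : ℕ) : Tz (n : ℤ) = n * (n + 1) / 2 := by
  have h2 := Tz_two_mul (n : ℤ)
  have hd : n * (n+1) / 2 * 2 = n * (n+1) := Nat.div_mul_cancel (Nat.even_mul_succ_self n).two_dvd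
  have : (2:ℤ) * (Tz n : ℤ) = 2 * ((n * (n+1) / 2 : ℕ) : ℤ) := by
    have hd' : ((n * (n+1) / 2 : ℕ) : ℤ) * 2 = (n:ℤ) * (n+1) := by exact_mod_cast congrArg (Nat.cast : ℕ → ℤ) hd
    linarith [h2, hd']
  omega

lemma Tz_ge (j : ℤ) : j.natAbs ≤ Tz j + 1 := by
  have h2 : 2 * (Tz j : ℤ) = j * j + j := by linear_combination Tz_two_mul j
  have goal : (j.natAbs : ℤ) ≤ (Tz j : ℤ) + 1 := by
    rcases le_or_gt 0 j with h | h
    · rw [Int.natAbs_of_nonneg h]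
      nlinarith [sq_nonneg (j - 1)]
    · have habs : (j.natAbs : ℤ) = -j := Int.ofNat_natAbs_of_nonpos (by omega)
      rw [habs]
      rcases le_or_gt j (-2) with h2' | h2'
      · have hp : (0:ℤ) ≤ (-(j+1)) * (-(j+2)) := mul_nonneg (by omega) (by omega)
        nlinarith [hp]
      · have hj1 : j = -1 := by omega
        subst hj1; omega
  exact_mod_cast goal

/-- key exponent lemma 1 -/
lemma TzL1 (N : ℕ) (j : ℤ) (hj : j ≤ N + 1) :
    Tz (j - 1) + (N + 1) = Tz j + ((N : ℤ) + 1 - j).toNat := by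
  have h1 := Tz_two_mul (j - 1)
  have h2 := Tz_two_mul j
  have h1' : 2 * (Tz (j-1) : ℤ) = j * j - j := by linear_combination h1
  have h2' : 2 * (Tz j : ℤ) = j * j + j := by linear_combination h2
  have ht : (((N : ℤ) + 1 - j).toNat : ℤ) = (N : ℤ) + 1 - j := Int.toNat_of_nonneg (by omega)
  have goal : (Tz (j-1) : ℤ) + (N + 1) = (Tz j : ℤ) + (((N : ℤ) + 1 - j).toNat : ℤ) := by
    rw [ht]; linarith [h1', h2']
  exact_mod_cast goal

/-- key exponent lemma 2 -/
lemma TzL2 (N : ℕ) (j : ℤ) (hj : -(N : ℤ) - 1 ≤ j) :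
    Tz (j + 1) + N = Tz j + ((N : ℤ) + 1 + j).toNat := by
  have h1 := Tz_two_mul (j + 1)
  have h2 := Tz_two_mul j
  have h1' : 2 * (Tz (j+1) : ℤ) = j * j + 3 * j + 2 := by linear_combination h1
  have h2' : 2 * (Tz j : ℤ) = j * j + j := by linear_combination h2
  have ht : (((N : ℤ) + 1 + j).toNat : ℤ) = (N : ℤ) + 1 + j := Int.toNat_of_nonneg (by omega)
  have goal : (Tz (j+1) : ℤ) + N = (Tz j : ℤ) + (((N : ℤ) + 1 + j).toNat : ℤ) := by
    rw [ht]; linarith [h1', h2']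
  exact_mod_cast goal


end Basic

noncomputable section

abbrev Zp := Polynomial ℤ
abbrev B := Polynomial Zp

def w : Zp := Polynomial.X

/-- cofactor polynomial -/
def Rr (N : ℕ) (j : ℤ) : B :=
  if j.natAbs ≤ N then Pp Zp ((N + j).toNat) (2*N) * Pp Zp ((N - j).toNat) (2*N) else 0

/-- term of the sum side -/
def tm (N : ℕ) (j : ℤ) : B := C (w ^ (((N : ℤ) + j).toNat)) * X ^ Tz j * Rr N j

lemma Rr_zero (N : ℕ) (j : ℤ) (h : N < j.natAbs) : Rr N j = 0 := if_neg (by omega)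

lemma tm_zero (N : ℕ) (j : ℤ) (h : N < j.natAbs) : tm N j = 0 := by
  rw [tm, Rr_zero N j h, mul_zero]

lemma step (N : ℕ) (j : ℤ) (hj : j.natAbs ≤ N + 1) :
    tm (N+1) j = (1 - X ^ (2*N+1)) * (1 - X ^ (2*N+2)) *
      ( C w * (1 + X ^ (2*N+1)) * tm N j + X ^ N * tm N (j+1)
        + C (w^2) * X ^ (N+1) * tm N (j-1) ) := by
  by_cases hgen : j.natAbs + 1 ≤ N
  · -- generic case: |j| ≤ N - 1
    obtain ⟨a', ha'⟩ : ∃ a', ((N : ℤ) + j).toNat = a' + 1 := ⟨((N : ℤ) + j).toNat - 1, by omega⟩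
    obtain ⟨b', hb'⟩ : ∃ b', ((N : ℤ) - j).toNat = b' + 1 := ⟨((N : ℤ) - j).toNat - 1, by omega⟩
    have hN : 2*N = a' + b' + 2 := by omega
    have ht1 : ((N:ℤ) + 1 + j).toNat = a' + 2 := by omega
    have ht2 : ((N:ℤ) + 1 - j).toNat = b' + 2 := by omega
    have ha1 : ((N:ℤ) + (j+1)).toNat = a' + 2 := by omega
    have ha2 : ((N:ℤ) + (j-1)).toNat = a' := by omega
    have hb1 : ((N:ℤ) - (j+1)).toNat = b' := by omega
    have hb2 : ((N:ℤ) - (j-1)).toNat = b' + 2 := by omega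
    have habs1 : (j+1).natAbs ≤ N := by omega
    have habs2 : (j-1).natAbs ≤ N := by omega
    have e2 : (X : B) ^ N * X ^ Tz (j+1) = X ^ Tz j * X ^ (a'+2) := by
      have := TzL2 N j (by omega)
      rw [← pow_add, ← pow_add]; congr 1; omega
    have e3 : (X : B) ^ (N+1) * X ^ Tz (j-1) = X ^ Tz j * X ^ (b'+2) := by
      have := TzL1 N j (by omega)
      rw [← pow_add, ← pow_add]; congr 1; omega
    have h2' : (X:B) ^ N * tm N (j+1)
        = (C w)^(a'+2) * (X ^ Tz j * X ^ (a'+2)) * (Pp Zp (a'+2) (2*N) * Pp Zp b' (2*N)) := by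
      rw [tm, Rr, if_pos habs1, ha1, hb1, Polynomial.C_pow, ← e2]; ring
    have h3' : C (w^2) * (X:B) ^ (N+1) * tm N (j-1)
        = (C w)^(a'+2) * (X ^ Tz j * X ^ (b'+2)) * (Pp Zp a' (2*N) * Pp Zp (b'+2) (2*N)) := by
      rw [tm, Rr, if_pos habs2, ha2, hb2, Polynomial.C_pow, Polynomial.C_pow, ← e3]; ring
    rw [h2', h3', tm, tm, Rr, Rr, if_pos (show j.natAbs ≤ N+1 by omega),
      if_pos (show j.natAbs ≤ N by omega)]
    simp only [Nat.cast_add, Nat.cast_one]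
    rw [ht1, ht2, ha', hb']
    rw [show 2*(N+1) = (a'+b'+2)+1+1 from by omega, hN]
    rw [Pp_peel_top (a'+2) ((a'+b'+2)+1) (by omega), Pp_peel_top (a'+2) (a'+b'+2) (by omega),
      Pp_peel_top (b'+2) ((a'+b'+2)+1) (by omega), Pp_peel_top (b'+2) (a'+b'+2) (by omega)]
    rw [Pp_peel_bot (a'+1) (a'+b'+2) (by omega), Pp_peel_bot (b'+1) (a'+b'+2) (by omega)]
    rw [Pp_peel_bot a' (a'+b'+2) (by omega), Pp_peel_bot b' (a'+b'+2) (by omega)]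
    rw [Pp_peel_bot (a'+1) (a'+b'+2) (by omega), Pp_peel_bot (b'+1) (a'+b'+2) (by omega)]
    simp only [Polynomial.C_pow]
    ring
  · -- edge cases
    have hcases : j = N+1 ∨ j = -(N:ℤ)-1 ∨ (j = N ∧ 1 ≤ N) ∨ (j = -(N:ℤ) ∧ 1 ≤ N) ∨ (j = 0 ∧ N = 0) := by omega
    have hz1 : tm N (N+1) = 0 := tm_zero _ _ (by omega)
    rcases hcases with rfl | rfl | ⟨rfl, hN1⟩ | ⟨hj0, hN1⟩ | ⟨rfl, rfl⟩
    · -- j = N+1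
      have hzA : tm N ((N:ℤ)+1+1) = 0 := tm_zero _ _ (by omega)
      have hzB : tm N ((N:ℤ)+1) = 0 := tm_zero _ _ (by omega)
      have eT : Tz ((N:ℤ)) + (N+1) = Tz ((N:ℤ)+1) := by
        have := TzL2 N (N:ℤ) (by omega); omega
      have e3 : (X:B) ^ (N+1) * X ^ Tz ((N:ℤ)) = X ^ Tz ((N:ℤ)+1) := by
        rw [← pow_add]; congr 1; omega
      rw [hzA, hzB, tm, tm, Rr, Rr, if_pos (by omega), if_pos (by omega)]
      simp only [Nat.cast_add, Nat.cast_one]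
      rw [show ((N:ℤ)+1+((N:ℤ)+1)).toNat = 2*N+2 from by omega,
        show ((N:ℤ)+1-((N:ℤ)+1)).toNat = 0 from by omega,
        show ((N:ℤ)+((N:ℤ)+1-1)).toNat = 2*N from by omega,
        show ((N:ℤ)-((N:ℤ)+1-1)).toNat = 0 from by omega,
        show Tz ((N:ℤ)+1-1) = Tz ((N:ℤ)) from by norm_num]
      rw [Pp_eq_one (2*N+2) (2*(N+1)) (by omega), Pp_eq_one (2*N) (2*N) (by omega)]
      rw [show 2*(N+1) = (2*N)+1+1 from by omega]
      rw [Pp_peel_top 0 ((2*N)+1) (by omega), Pp_peel_top 0 (2*N) (by omega)]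
      rw [← e3]
      simp only [Polynomial.C_pow]
      ring
    · -- j = -(N+1)
      have hzA : tm N (-(N:ℤ)-1) = 0 := tm_zero _ _ (by omega)
      have hzB : tm N (-(N:ℤ)-1-1) = 0 := tm_zero _ _ (by omega)
      have e2 : (X:B) ^ N * X ^ Tz (-(N:ℤ)-1+1) = X ^ Tz (-(N:ℤ)-1) := by
        have := TzL2 N (-(N:ℤ)-1) (by omega)
        rw [← pow_add]; congr 1; omega
      rw [hzA, hzB, tm, tm, Rr, Rr, if_pos (by omega), if_pos (by omega)]
      simp only [Nat.cast_add, Nat.cast_one]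
      rw [show ((N:ℤ)+1+(-(N:ℤ)-1)).toNat = 0 from by omega,
        show ((N:ℤ)+1-(-(N:ℤ)-1)).toNat = 2*N+2 from by omega,
        show ((N:ℤ)+(-(N:ℤ)-1+1)).toNat = 0 from by omega,
        show ((N:ℤ)-(-(N:ℤ)-1+1)).toNat = 2*N from by omega]
      rw [Pp_eq_one (2*N+2) (2*(N+1)) (by omega), Pp_eq_one (2*N) (2*N) (by omega)]
      rw [show 2*(N+1) = (2*N)+1+1 from by omega]
      rw [Pp_peel_top 0 ((2*N)+1) (by omega), Pp_peel_top 0 (2*N) (by omega)]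
      rw [← e2]
      simp only [Polynomial.C_pow, pow_zero, Polynomial.C_1]
      ring
    · -- j = N, N ≥ 1
      obtain ⟨M, rfl⟩ : ∃ M, N = M + 1 := ⟨N - 1, by omega⟩
      push_cast
      have hzB : tm (M+1) ((M:ℤ)+1+1) = 0 := tm_zero _ _ (by omega)
      have e3 : (X:B) ^ (M+1+1) * X ^ Tz ((M:ℤ)+1-1) = X ^ Tz ((M:ℤ)+1) * X := by
        have := TzL1 (M+1) ((M:ℤ)+1) (by push_cast; omega)
        push_cast at this
        rw [← pow_add, ← pow_succ]; congr 1; omega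
      have h3' : C (w^2) * (X:B) ^ (M+1+1) * tm (M+1) ((M:ℤ)+1-1)
          = (C w)^(2*M+3) * (X ^ Tz ((M:ℤ)+1) * X) * ((1 - X^(2*M+2)) * Pp Zp 1 (2*(M+1))) := by
        rw [tm, Rr, if_pos (by omega)]
        push_cast
        rw [show ((M:ℤ)+1+((M:ℤ)+1-1)).toNat = 2*M+1 from by omega,
          show ((M:ℤ)+1-((M:ℤ)+1-1)).toNat = 1 from by omega,
          show Pp Zp (2*M+1) (2*(M+1)) = 1 - X^(2*M+2) from by
            rw [show 2*(M+1) = (2*M+1)+1 from by omega]; exact Pp_single (2*M+1),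
          Polynomial.C_pow, Polynomial.C_pow, ← e3]
        ring
      rw [hzB, h3', tm, tm, Rr, Rr, if_pos (by omega), if_pos (by omega)]
      push_cast
      rw [show ((M:ℤ)+1+1+((M:ℤ)+1)).toNat = 2*M+3 from by omega,
        show ((M:ℤ)+1+1-((M:ℤ)+1)).toNat = 1 from by omega,
        show ((M:ℤ)+1+((M:ℤ)+1)).toNat = 2*(M+1) from by omega,
        show ((M:ℤ)+1-((M:ℤ)+1)).toNat = 0 from by omega]
      rw [show Pp Zp (2*M+3) (2*(M+1+1)) = 1 - X^(2*M+4) from by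
          rw [show 2*(M+1+1) = (2*M+3)+1 from by omega]; exact Pp_single (2*M+3)]
      rw [show (2*(M+1+1)) = (2*(M+1))+1+1 from by omega]
      rw [Pp_peel_top 1 ((2*(M+1))+1) (by omega), Pp_peel_top 1 (2*(M+1)) (by omega)]
      rw [Pp_eq_one (2*(M+1)) (2*(M+1)) (by omega)]
      rw [Pp_peel_bot 0 (2*(M+1)) (by omega)]
      rw [show 2*(M+1)+1+1 = 2*M+4 from by omega, show 2*(M+1)+1 = 2*M+3 from by omega,
        show 2*(M+1) = 2*M+2 from by omega]
      simp only [Polynomial.C_pow, pow_zero, pow_one, Polynomial.C_1]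
      ring
    · -- j = -N, N ≥ 1
      obtain ⟨M, rfl⟩ : ∃ M, N = M + 1 := ⟨N - 1, by omega⟩
      subst hj0
      push_cast
      have hzB : tm (M+1) (-((M:ℤ)+1)-1) = 0 := tm_zero _ _ (by omega)
      have e2 : (X:B) ^ (M+1) * X ^ Tz (-((M:ℤ)+1)+1) = X ^ Tz (-((M:ℤ)+1)) * X := by
        have := TzL2 (M+1) (-((M:ℤ)+1)) (by push_cast; omega)
        push_cast at this
        rw [← pow_add, ← pow_succ]; congr 1; omega
      have h2' : (X:B) ^ (M+1) * tm (M+1) (-((M:ℤ)+1)+1)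
          = C w * (X ^ Tz (-((M:ℤ)+1)) * X) * (Pp Zp 1 (2*(M+1)) * (1 - X^(2*M+2))) := by
        rw [tm, Rr, if_pos (by omega)]
        push_cast
        rw [show ((M:ℤ)+1+(-((M:ℤ)+1)+1)).toNat = 1 from by omega,
          show ((M:ℤ)+1-(-((M:ℤ)+1)+1)).toNat = 2*M+1 from by omega,
          show Pp Zp (2*M+1) (2*(M+1)) = 1 - X^(2*M+2) from by
            rw [show 2*(M+1) = (2*M+1)+1 from by omega]; exact Pp_single (2*M+1),
          ← e2]
        simp only [pow_one]
        ring
      rw [hzB, h2', tm, tm, Rr, Rr, if_pos (by omega), if_pos (by omega)]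
      push_cast
      rw [show ((M:ℤ)+1+1+(-((M:ℤ)+1))).toNat = 1 from by omega,
        show ((M:ℤ)+1+1-(-((M:ℤ)+1))).toNat = 2*M+3 from by omega,
        show ((M:ℤ)+1+(-((M:ℤ)+1))).toNat = 0 from by omega,
        show ((M:ℤ)+1-(-((M:ℤ)+1))).toNat = 2*(M+1) from by omega]
      rw [show Pp Zp (2*M+3) (2*(M+1+1)) = 1 - X^(2*M+4) from by
          rw [show 2*(M+1+1) = (2*M+3)+1 from by omega]; exact Pp_single (2*M+3)]
      rw [show (2*(M+1+1)) = (2*(M+1))+1+1 from by omega]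
      rw [Pp_peel_top 1 ((2*(M+1))+1) (by omega), Pp_peel_top 1 (2*(M+1)) (by omega)]
      rw [Pp_eq_one (2*(M+1)) (2*(M+1)) (by omega)]
      rw [Pp_peel_bot 0 (2*(M+1)) (by omega)]
      rw [show 2*(M+1)+1+1 = 2*M+4 from by omega, show 2*(M+1)+1 = 2*M+3 from by omega,
        show 2*(M+1) = 2*M+2 from by omega]
      simp only [Polynomial.C_pow, pow_zero, pow_one, Polynomial.C_1]
      ring
    · -- N = 0, j = 0
      have hz1 : tm 0 1 = 0 := tm_zero _ _ (by omega)
      have hz2 : tm 0 (-1) = 0 := tm_zero _ _ (by omega)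
      rw [show (0:ℤ)+1 = 1 from rfl, show (0:ℤ)-1 = -1 from rfl, hz1, hz2, tm, tm, Rr, Rr,
        if_pos (by omega), if_pos (by omega)]
      norm_num
      rw [show Pp Zp 1 2 = 1 - X^2 from Pp_single 1, Pp_eq_one 0 0 (by omega)]
      ring

def S (N : ℕ) : B := ∑ j ∈ Finset.Icc (-(N:ℤ)) N, tm N j

lemma sum_tm_eq (N : ℕ) (lo hi : ℤ) (hlo : lo ≤ -(N:ℤ)) (hhi : (N:ℤ) ≤ hi) :
    ∑ j ∈ Finset.Icc lo hi, tm N j = S N := by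
  rw [S]; symm
  apply Finset.sum_subset
  · intro x hx; simp only [Finset.mem_Icc] at *; omega
  · intro x hx hnx
    apply tm_zero
    simp only [Finset.mem_Icc] at hx hnx
    omega

lemma sum_shift_c (g : ℤ → B) (lo hi c : ℤ) :
    ∑ j ∈ Finset.Icc lo hi, g (j + c) = ∑ j ∈ Finset.Icc (lo+c) (hi+c), g j := by
  rw [← Finset.map_add_right_Icc lo hi c, Finset.sum_map]
  simp [addRightEmbedding]

lemma S_succ (N : ℕ) : S (N+1) = (1 - X^(2*N+1)) * (1 - X^(2*N+2)) *
    ( C w * (1 + X^(2*N+1)) * S N + X^N * S N + C (w^2) * X^(N+1) * S N ) := by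
  have hIcc : (Finset.Icc (-((N+1:ℕ):ℤ)) ((N+1:ℕ):ℤ)) = Finset.Icc (-(N:ℤ)-1) ((N:ℤ)+1) := by
    push_cast; congr 1; ring
  rw [S, hIcc]
  rw [Finset.sum_congr rfl (fun j hj => step N j (by
    simp only [Finset.mem_Icc] at hj; omega))]
  rw [← Finset.mul_sum]
  congr 1
  rw [Finset.sum_add_distrib, Finset.sum_add_distrib, ← Finset.mul_sum, ← Finset.mul_sum,
    ← Finset.mul_sum]
  have h1 : ∑ j ∈ Finset.Icc (-(N:ℤ)-1) ((N:ℤ)+1), tm N j = S N :=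
    sum_tm_eq N _ _ (by omega) (by omega)
  have h2 : ∑ j ∈ Finset.Icc (-(N:ℤ)-1) ((N:ℤ)+1), tm N (j+1) = S N := by
    rw [sum_shift_c (tm N) _ _ 1]
    exact sum_tm_eq N _ _ (by omega) (by omega)
  have h3 : ∑ j ∈ Finset.Icc (-(N:ℤ)-1) ((N:ℤ)+1), tm N (j-1) = S N := by
    have : ∀ j : ℤ, tm N (j - 1) = tm N (j + (-1)) := fun j => by rw [sub_eq_add_neg]
    rw [Finset.sum_congr rfl (fun j _ => this j), sum_shift_c (tm N) _ _ (-1)]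
    exact sum_tm_eq N _ _ (by omega) (by omega)
  rw [h1, h2, h3]

lemma master (N : ℕ) :
    Pp Zp 0 (2*N) * (∏ k ∈ Finset.Ioc 0 N, (1 + C w * X ^ k))
      * (∏ k ∈ Finset.range N, (C w + X ^ k)) = S N := by
  induction N with
  | zero =>
    rw [S]
    norm_num [Finset.Icc_self, Finset.sum_singleton]
    rw [tm, Rr, if_pos (by omega)]
    norm_num [Pp_eq_one, show Tz 0 = 0 from rfl]
  | succ N ih =>
    have hL : Pp Zp 0 (2*(N+1)) = Pp Zp 0 (2*N) * ((1 - X^(2*N+1)) * (1 - X^(2*N+2))) := by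
      rw [show 2*(N+1) = (2*N+1)+1 from by omega, Pp_peel_top 0 (2*N+1) (by omega),
        show 2*N+1 = (2*N)+1 from rfl, Pp_peel_top 0 (2*N) (by omega)]
      ring
    rw [hL, Finset.prod_Ioc_succ_top (Nat.zero_le N), Finset.prod_range_succ, S_succ]
    calc Pp Zp 0 (2*N) * ((1 - X^(2*N+1)) * (1 - X^(2*N+2)))
          * ((∏ k ∈ Finset.Ioc 0 N, (1 + C w * X ^ k)) * (1 + C w * X^(N+1)))
          * ((∏ k ∈ Finset.range N, (C w + X ^ k)) * (C w + X^N))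
        = (Pp Zp 0 (2*N) * (∏ k ∈ Finset.Ioc 0 N, (1 + C w * X ^ k))
            * (∏ k ∈ Finset.range N, (C w + X ^ k)))
          * (((1 - X^(2*N+1)) * (1 - X^(2*N+2))) * ((1 + C w * X^(N+1)) * (C w + X^N))) := by
          ring
      _ = S N * (((1 - X^(2*N+1)) * (1 - X^(2*N+2))) * ((1 + C w * X^(N+1)) * (C w + X^N))) := by
          rw [ih]
      _ = (1 - X^(2*N+1)) * (1 - X^(2*N+2)) *
          ( C w * (1 + X^(2*N+1)) * S N + X^N * S N + C (w^2) * X^(N+1) * S N ) := by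
          simp only [Polynomial.C_pow]
          ring


lemma coeff_mul_delta {R : Type*} [CommRing R] (p q : Polynomial R) (c : ℕ)
    (hp : ∀ i ≤ c, p.coeff i = if i = 0 then 1 else 0)
    (hq : ∀ i ≤ c, q.coeff i = if i = 0 then 1 else 0) :
    ∀ i ≤ c, (p * q).coeff i = if i = 0 then 1 else 0 := by
  intro i hi
  rw [Polynomial.coeff_mul]
  have : ∀ x ∈ Finset.HasAntidiagonal.antidiagonal i, p.coeff x.1 * q.coeff x.2
      = if (0,0) = x then 1 else 0 := by
    intro x hx
    rw [Finset.HasAntidiagonal.mem_antidiagonal] at hx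
    rw [hp x.1 (by omega), hq x.2 (by omega)]
    rcases x with ⟨x1, x2⟩
    by_cases h1 : x1 = 0 <;> by_cases h2 : x2 = 0 <;>
      simp [h1, h2, Prod.ext_iff, eq_comm]
  rw [Finset.sum_congr rfl this, Finset.sum_ite_eq]
  simp [Finset.HasAntidiagonal.mem_antidiagonal, eq_comm]

lemma Rr_coeff_low (N : ℕ) (j : ℤ) (i : ℕ) (hi : i + j.natAbs ≤ N) :
    (Rr N j).coeff i = if i = 0 then 1 else 0 := by
  rw [Rr, if_pos (by omega)]
  refine coeff_mul_delta _ _ i (fun i' hi' => Pp_coeff_low _ _ i' (by omega))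
    (fun i' hi' => Pp_coeff_low _ _ i' (by omega)) i le_rfl

lemma coeff_S (n N : ℕ) (h : n + 1 ≤ N) :
    (S N).coeff n = ∑ j ∈ Finset.Icc (-(N:ℤ)) N,
      (if Tz j = n then w ^ (((N:ℤ)+j).toNat) else 0) := by
  rw [S, Polynomial.finset_sum_coeff]
  apply Finset.sum_congr rfl
  intro j hj
  simp only [Finset.mem_Icc] at hj
  have htm : tm N j = C (w ^ (((N:ℤ)+j).toNat)) * (Rr N j * X ^ Tz j) := by
    rw [tm]; ring
  rw [htm, Polynomial.coeff_C_mul, Polynomial.coeff_mul_X_pow']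
  by_cases hle : Tz j ≤ n
  · rw [if_pos hle, Rr_coeff_low N j (n - Tz j) (by
      have := Tz_ge j; omega)]
    by_cases heq : Tz j = n
    · rw [if_pos (by omega), if_pos heq, mul_one]
    · rw [if_neg (by omega), if_neg heq, mul_zero]
  · rw [if_neg hle, if_neg (by omega), mul_zero]

/-- the coefficient-extracted master identity -/
lemma coeff_master (n N : ℕ) (h : n + 1 ≤ N) :
    (Pp Zp 0 (2*N) * (∏ k ∈ Finset.Ioc 0 N, (1 + C w * X ^ k))
      * (∏ k ∈ Finset.range N, (C w + X ^ k))).coeff n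
    = ∑ j ∈ Finset.Icc (-(N:ℤ)) N, (if Tz j = n then w ^ (((N:ℤ)+j).toNat) else 0) := by
  rw [master, coeff_S n N h]



lemma Tz_nat_ge (k : ℕ) : k ≤ Tz (k : ℤ) := by
  have h := Tz_two_mul (k : ℤ)
  have : 2 * (Tz (k:ℤ) : ℤ) = (k:ℤ) * k + k := by linear_combination h
  nlinarith [this, sq_nonneg ((k:ℤ) - 1)]

lemma pair_sum {M : Type*} [AddCommMonoid M] (N : ℕ) (g : ℤ → M) :
    ∑ j ∈ Finset.Icc (-(N:ℤ)) N, g j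
      = ∑ j ∈ Finset.Icc (0:ℤ) N, g j + ∑ j ∈ Finset.Icc (0:ℤ) ((N:ℤ)-1), g (-j-1) := by
  have hsplit : Finset.Icc (-(N:ℤ)) N = Finset.Icc (-(N:ℤ)) (-1) ∪ Finset.Icc 0 N := by
    ext x; simp only [Finset.mem_Icc, Finset.mem_union]; omega
  rw [hsplit, Finset.sum_union (by
    rw [Finset.disjoint_left]; intro x hx hx'
    simp only [Finset.mem_Icc] at hx hx'; omega)]
  rw [add_comm]
  congr 1
  apply Finset.sum_nbij' (i := fun j => -j-1) (j := fun j => -j-1)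
  · intro a ha; simp only [Finset.mem_Icc] at *; omega
  · intro a ha; simp only [Finset.mem_Icc] at *; omega
  · intro a _; omega
  · intro a _; omega
  · intro a _; congr 1; omega

lemma Icc_int_sum {M : Type*} [AddCommMonoid M] (g : ℤ → M) (N : ℕ) :
    ∑ j ∈ Finset.Icc (0:ℤ) N, g j = ∑ k ∈ Finset.range (N+1), g k := by
  symm
  apply Finset.sum_nbij' (i := fun (k : ℕ) => (k : ℤ)) (j := fun (j : ℤ) => j.toNat)
  · intro a ha; simp only [Finset.mem_range] at ha; simp only [Finset.mem_Icc]; omega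
  · intro a ha; simp only [Finset.mem_Icc] at ha; simp only [Finset.mem_range]; omega
  · intro a _; omega
  · intro a ha; simp only [Finset.mem_Icc] at ha; omega
  · intro a _; rfl

lemma sum_restrict {M : Type*} [AddCommMonoid M] (n N : ℕ) (h : n ≤ N) (F : ℕ → M) :
    ∑ k ∈ Finset.range (N+1), (if Tz k = n then F k else 0)
      = ∑ k ∈ Finset.range (n+1), (if Tz k = n then F k else 0) := by
  symm
  apply Finset.sum_subset
  · intro x hx; simp only [Finset.mem_range] at *; omega
  · intro x hx hnx
    simp only [Finset.mem_range] at hx hnx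
    rw [if_neg]
    have := Tz_nat_ge x
    omega

noncomputable def ev1 : Zp →+* ℤ := Polynomial.evalRingHom 1

lemma ev1_w : ev1 w = 1 := Polynomial.eval_X

lemma map_Pp {R S : Type*} [CommRing R] [CommRing S] (φ : R →+* S) (a b : ℕ) :
    (Pp R a b).map φ = Pp S a b := by
  rw [Pp, Pp, Polynomial.map_prod]
  apply Finset.prod_congr rfl
  intro k _
  simp

/-- tc n = 1 if n is triangular, else 0 -/
def tc (n : ℕ) : ℤ := ∑ k ∈ Finset.range (n+1), (if Tz (k:ℤ) = n then 1 else 0)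

lemma GPOLY (n N : ℕ) (h : n + 1 ≤ N) :
    (Pp ℤ 0 (2*N) * (∏ k ∈ Finset.Ioc 0 N, (1+X^k))
      * (∏ k ∈ Finset.range N, ((1:Polynomial ℤ)+X^k))).coeff n = 2 * tc n := by
  have hm := congrArg ev1 (coeff_master n N h)
  rw [← Polynomial.coeff_map] at hm
  have hmap : (Pp Zp 0 (2*N) * (∏ k ∈ Finset.Ioc 0 N, (1 + C w * X ^ k))
      * (∏ k ∈ Finset.range N, (C w + X ^ k))).map ev1
      = Pp ℤ 0 (2*N) * (∏ k ∈ Finset.Ioc 0 N, (1+X^k))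
        * (∏ k ∈ Finset.range N, ((1:Polynomial ℤ)+X^k)) := by
    rw [Polynomial.map_mul, Polynomial.map_mul, map_Pp, Polynomial.map_prod,
      Polynomial.map_prod]
    congr 1
    · congr 1
      apply Finset.prod_congr rfl; intro k _; simp [ev1_w]
    · apply Finset.prod_congr rfl; intro k _; simp [ev1_w, add_comm]
  rw [hmap] at hm
  rw [hm, map_sum]
  have : ∀ j ∈ Finset.Icc (-(N:ℤ)) N,
      ev1 (if Tz j = n then w ^ (((N:ℤ)+j).toNat) else 0) = (if Tz j = n then (1:ℤ) else 0) := by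
    intro j _
    split <;> simp [ev1_w, map_pow]
  rw [Finset.sum_congr rfl this, pair_sum]
  have hTzneg : ∀ j : ℤ, Tz (-j - 1) = Tz j := Tz_neg
  have h2 : ∑ j ∈ Finset.Icc (0:ℤ) ((N:ℤ)-1), (if Tz (-j-1) = n then (1:ℤ) else 0)
      = ∑ j ∈ Finset.Icc (0:ℤ) ((N:ℤ)-1), (if Tz j = n then (1:ℤ) else 0) := by
    apply Finset.sum_congr rfl; intro j _; rw [hTzneg]
  rw [h2]
  have e1 : ∑ j ∈ Finset.Icc (0:ℤ) (N:ℤ), (if Tz j = n then (1:ℤ) else 0) = tc n := by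
    rw [Icc_int_sum, sum_restrict n N (by omega), tc]
  have e2 : ∑ j ∈ Finset.Icc (0:ℤ) ((N:ℤ)-1), (if Tz j = n then (1:ℤ) else 0) = tc n := by
    obtain ⟨N', rfl⟩ : ∃ N', N = N' + 1 := ⟨N - 1, by omega⟩
    have : ((N'+1:ℕ):ℤ) - 1 = (N' : ℤ) := by push_cast; ring
    rw [this, Icc_int_sum, sum_restrict n N' (by omega), tc]
  rw [e1, e2]; ring


noncomputable def sg : Zp →+* Zp := Polynomial.eval₂RingHom Polynomial.C (-Polynomial.X)

lemma sg_w : sg w = -w := by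
  rw [sg, w, Polynomial.coe_eval₂RingHom, Polynomial.eval₂_X]

lemma sg_wpow (e : ℕ) : sg (w ^ e) = (-1)^e * w^e := by
  rw [map_pow, sg_w]; ring

lemma one_sub_w_ne : (1 : Zp) - w ≠ 0 := by
  intro hcon
  have := congrArg (fun p => Polynomial.coeff p 1) hcon
  simp [w, Polynomial.coeff_one] at this

lemma prod_range_Ioc {R : Type*} [CommRing R] (g : ℕ → Polynomial R) (M : ℕ) :
    ∏ k ∈ Finset.range M, g (k+1) = ∏ k ∈ Finset.Ioc 0 M, g k := by
  induction M with
  | zero => simp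
  | succ M ih => rw [Finset.prod_range_succ, ih, Finset.prod_Ioc_succ_top (Nat.zero_le M)]

lemma prod_neg_ones (M : ℕ) :
    ∏ k ∈ Finset.range M, (X^(k+1) - (1:Polynomial ℤ)) = (-1)^M * Pp ℤ 0 M := by
  have : ∀ k ∈ Finset.range M, (X^(k+1) - (1:Polynomial ℤ)) = (-1) * (1 - X^(k+1)) := by
    intro k _; ring
  rw [Finset.prod_congr rfl this, Finset.prod_mul_distrib, Finset.prod_const,
    Finset.card_range, prod_range_Ioc (fun k => 1 - X^k) M, Pp]

/-- Jacobi coefficients -/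
def jc (n : ℕ) : ℤ := ∑ k ∈ Finset.range (n+1), (if Tz (k:ℤ) = n then (-1:ℤ)^k * (2*k+1) else 0)

lemma JPOLY (n N' : ℕ) (h : n ≤ N') :
    (Pp ℤ 0 (2*(N'+1)) * Pp ℤ 0 (N'+1) * Pp ℤ 0 N').coeff n = jc n := by
  have hm := congrArg sg (coeff_master n (N'+1) (by omega))
  rw [← Polynomial.coeff_map] at hm
  -- compute the σ-mapped LHS
  have hmap : (Pp Zp 0 (2*(N'+1)) * (∏ k ∈ Finset.Ioc 0 (N'+1), (1 + C w * X ^ k))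
      * (∏ k ∈ Finset.range (N'+1), (C w + X ^ k))).map sg
      = C ((1:Zp) - w) * (Pp Zp 0 (2*(N'+1)) * (∏ k ∈ Finset.Ioc 0 (N'+1), (1 - C w * X^k))
          * (∏ k ∈ Finset.range N', (X^(k+1) - C w))) := by
    rw [Polynomial.map_mul, Polynomial.map_mul, map_Pp, Polynomial.map_prod, Polynomial.map_prod]
    have e1 : ∀ k ∈ Finset.Ioc 0 (N'+1), ((1 : B) + C w * X ^ k).map sg = 1 - C w * X^k := by
      intro k _
      simp only [Polynomial.map_add, Polynomial.map_one, Polynomial.map_mul, Polynomial.map_C,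
        Polynomial.map_pow, Polynomial.map_X, sg_w, map_neg]
      ring
    have e2 : ∀ k ∈ Finset.range (N'+1), ((C w : B) + X ^ k).map sg = X^k - C w := by
      intro k _
      simp only [Polynomial.map_add, Polynomial.map_C, Polynomial.map_pow, Polynomial.map_X,
        sg_w, map_neg]
      ring
    rw [Finset.prod_congr rfl e1, Finset.prod_congr rfl e2, Finset.prod_range_succ']
    simp only [pow_zero]
    rw [Polynomial.C_sub, Polynomial.C_1]
    ring
  rw [hmap, Polynomial.coeff_C_mul] at hm
  -- compute the σ-mapped RHS sum
  rw [map_sum] at hm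
  have hrhs : ∀ j ∈ Finset.Icc (-((N'+1:ℕ):ℤ)) ((N'+1:ℕ):ℤ),
      sg (if Tz j = n then w ^ ((((N'+1:ℕ):ℤ)+j).toNat) else 0)
      = (if Tz j = n then (-1:Zp)^((((N'+1:ℕ):ℤ)+j).toNat) * w ^ ((((N'+1:ℕ):ℤ)+j).toNat) else 0) := by
    intro j _
    split
    · rw [sg_wpow]
    · rw [map_zero]
  rw [Finset.sum_congr rfl hrhs, pair_sum] at hm
  -- convert both sums to finite nat sums restricted to range (n+1)
  have hc1 : ∑ j ∈ Finset.Icc (0:ℤ) ((N'+1:ℕ):ℤ),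
      (if Tz j = n then (-1:Zp)^((((N'+1:ℕ):ℤ)+j).toNat) * w ^ ((((N'+1:ℕ):ℤ)+j).toNat) else 0)
      = ∑ k ∈ Finset.range (n+1), (if Tz (k:ℤ) = n then (-1:Zp)^(N'+1+k) * w^(N'+1+k) else 0) := by
    rw [Icc_int_sum]
    have : ∀ k ∈ Finset.range ((N'+1)+1),
        (if Tz (k:ℤ) = n then (-1:Zp)^((((N'+1:ℕ):ℤ)+(k:ℤ)).toNat) * w ^ ((((N'+1:ℕ):ℤ)+(k:ℤ)).toNat) else 0)
        = (if Tz (k:ℤ) = n then (-1:Zp)^(N'+1+k) * w^(N'+1+k) else 0) := by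
      intro k _
      rw [show ((((N'+1:ℕ):ℤ)+(k:ℤ)).toNat) = N'+1+k from by omega]
    rw [Finset.sum_congr rfl this, sum_restrict n (N'+1) (by omega)]
  have hc2 : ∑ j ∈ Finset.Icc (0:ℤ) (((N'+1:ℕ):ℤ)-1),
      (if Tz (-j-1) = n then (-1:Zp)^((((N'+1:ℕ):ℤ)+(-j-1)).toNat) * w ^ ((((N'+1:ℕ):ℤ)+(-j-1)).toNat) else 0)
      = ∑ k ∈ Finset.range (n+1), (if Tz (k:ℤ) = n then (-1:Zp)^(N'-k) * w^(N'-k) else 0) := by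
    have hcast : (((N'+1:ℕ):ℤ)-1) = ((N' : ℕ) : ℤ) := by push_cast; ring
    rw [hcast, Icc_int_sum]
    have : ∀ k ∈ Finset.range (N'+1),
        (if Tz (-(k:ℤ)-1) = n then (-1:Zp)^((((N'+1:ℕ):ℤ)+(-(k:ℤ)-1)).toNat) * w ^ ((((N'+1:ℕ):ℤ)+(-(k:ℤ)-1)).toNat) else 0)
        = (if Tz (k:ℤ) = n then (-1:Zp)^(N'-k) * w^(N'-k) else 0) := by
      intro k hk
      simp only [Finset.mem_range] at hk
      rw [Tz_neg, show ((((N'+1:ℕ):ℤ)+(-(k:ℤ)-1)).toNat) = N'-k from by omega]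
    rw [Finset.sum_congr rfl this, sum_restrict n N' (by omega)]
  rw [hc1, hc2, ← Finset.sum_add_distrib] at hm
  -- factor (w - 1) out of each summand
  have hfac : ∀ k ∈ Finset.range (n+1),
      ((if Tz (k:ℤ) = n then (-1:Zp)^(N'+1+k) * w^(N'+1+k) else 0)
        + (if Tz (k:ℤ) = n then (-1:Zp)^(N'-k) * w^(N'-k) else 0))
      = ((1:Zp) - w) * (if Tz (k:ℤ) = n
          then -((-1:Zp)^(N'+1+k) * w^(N'-k) * (∑ i ∈ Finset.range (2*k+1), w^i)) else 0) := by
    intro k hk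
    simp only [Finset.mem_range] at hk
    by_cases hT : Tz (k:ℤ) = n
    · rw [if_pos hT, if_pos hT, if_pos hT]
      have hgeo : (∑ i ∈ Finset.range (2*k+1), (w:Zp)^i) * (w - 1) = w^(2*k+1) - 1 :=
        geom_sum_mul w (2*k+1)
      have hsign : (-1:Zp)^(N'-k) = -((-1:Zp)^(N'+1+k)) := by
        have hodd : Odd (2*k+1) := ⟨k, by omega⟩
        have : (-1:Zp)^(N'+1+k) = (-1:Zp)^(N'-k) * (-1:Zp)^(2*k+1) := by
          rw [← pow_add]; congr 1; omega
        rw [this, hodd.neg_one_pow]; ring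
      have hexp : (w:Zp)^(N'-k) * w^(2*k+1) = w^(N'+1+k) := by
        rw [← pow_add]; congr 1; omega
      rw [hsign]
      calc (-1:Zp)^(N'+1+k) * w^(N'+1+k) + -(-1:Zp)^(N'+1+k) * w^(N'-k)
          = (-1:Zp)^(N'+1+k) * (w^(N'-k) * (w^(2*k+1) - 1)) := by rw [mul_sub, hexp]; ring
        _ = (-1:Zp)^(N'+1+k) * (w^(N'-k) * ((∑ i ∈ Finset.range (2*k+1), w^i) * (w - 1))) := by
            rw [hgeo]
        _ = ((1:Zp) - w) * (-((-1:Zp)^(N'+1+k) * w^(N'-k) * (∑ i ∈ Finset.range (2*k+1), w^i))) := by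
            ring
    · rw [if_neg hT, if_neg hT, if_neg hT, add_zero, mul_zero]
  rw [Finset.sum_congr rfl hfac, ← Finset.mul_sum] at hm
  -- cancel (1 - w)
  have hm2 := mul_left_cancel₀ one_sub_w_ne hm
  -- evaluate at z = 1
  have hm3 := congrArg ev1 hm2
  rw [← Polynomial.coeff_map] at hm3
  have hmap2 : (Pp Zp 0 (2*(N'+1)) * (∏ k ∈ Finset.Ioc 0 (N'+1), (1 - C w * X^k))
      * (∏ k ∈ Finset.range N', (X^(k+1) - C w))).map ev1
      = (-1)^N' * (Pp ℤ 0 (2*(N'+1)) * Pp ℤ 0 (N'+1) * Pp ℤ 0 N') := by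
    rw [Polynomial.map_mul, Polynomial.map_mul, map_Pp, Polynomial.map_prod, Polynomial.map_prod]
    have e1 : ∀ k ∈ Finset.Ioc 0 (N'+1), ((1 : B) - C w * X ^ k).map ev1 = 1 - X^k := by
      intro k _
      simp only [Polynomial.map_sub, Polynomial.map_one, Polynomial.map_mul, Polynomial.map_C,
        Polynomial.map_pow, Polynomial.map_X, ev1_w, Polynomial.C_1]
      ring
    have e2 : ∀ k ∈ Finset.range N', ((X:B)^(k+1) - C w).map ev1 = X^(k+1) - 1 := by
      intro k _
      simp only [Polynomial.map_sub, Polynomial.map_C, Polynomial.map_pow, Polynomial.map_X,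
        ev1_w, Polynomial.C_1]
    rw [Finset.prod_congr rfl e1, Finset.prod_congr rfl e2, prod_neg_ones]
    simp only [Pp]
    ring
  rw [hmap2] at hm3
  rw [map_sum] at hm3
  have hsum3 : ∀ k ∈ Finset.range (n+1),
      ev1 (if Tz (k:ℤ) = n
          then -((-1:Zp)^(N'+1+k) * w^(N'-k) * (∑ i ∈ Finset.range (2*k+1), w^i)) else 0)
      = (if Tz (k:ℤ) = n then -((-1:ℤ)^(N'+1+k) * (2*k+1)) else 0) := by
    intro k _
    split
    · rw [map_neg, map_mul, map_mul, map_pow, map_pow, ev1_w, map_sum]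
      have : ∀ i ∈ Finset.range (2*k+1), ev1 (w^i) = 1 := by
        intro i _; rw [map_pow, ev1_w, one_pow]
      rw [Finset.sum_congr rfl this, Finset.sum_const, Finset.card_range]
      push_cast
      ring_nf
      rw [show ev1 (-1) = -1 from by rw [map_neg, map_one]]
      ring
    · rw [map_zero]
  rw [Finset.sum_congr rfl hsum3] at hm3
  -- extract the coefficient equation and fix signs
  have hcoeff : ((-1:Polynomial ℤ)^N' * (Pp ℤ 0 (2*(N'+1)) * Pp ℤ 0 (N'+1) * Pp ℤ 0 N')).coeff n
      = (-1:ℤ)^N' * (Pp ℤ 0 (2*(N'+1)) * Pp ℤ 0 (N'+1) * Pp ℤ 0 N').coeff n := by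
    rw [show ((-1:Polynomial ℤ)^N') = C ((-1:ℤ)^N') from by rw [map_pow, Polynomial.C_neg, Polynomial.C_1],
      Polynomial.coeff_C_mul]
  rw [hcoeff] at hm3
  have ht : (-1:ℤ)^N' * (-1:ℤ)^N' = 1 := by
    rw [← pow_add]; exact Even.neg_one_pow ⟨N', by ring⟩
  have hmul := congrArg (fun x => ((-1:ℤ)^N') * x) hm3
  rw [← mul_assoc, ht, one_mul, Finset.mul_sum] at hmul
  rw [hmul, jc]
  apply Finset.sum_congr rfl
  intro k _
  rw [mul_ite, mul_zero]
  split
  · rw [pow_add, pow_succ]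
    linear_combination ((-1:ℤ)^k * (2*(k:ℤ)+1)) * ht
  · rfl


/-! ### PowerSeries layer -/

section Agr
variable {R : Type*} [CommRing R]

def Agr (n : ℕ) (F G : PowerSeries R) : Prop :=
  ∀ i, i ≤ n → PowerSeries.coeff i F = PowerSeries.coeff i G

lemma Agr.refl (n : ℕ) (F : PowerSeries R) : Agr n F F := fun _ _ => rfl

lemma Agr.mul {n : ℕ} {F F' G G' : PowerSeries R} (h1 : Agr n F F') (h2 : Agr n G G') :
    Agr n (F * G) (F' * G') := by
  intro i hi
  rw [PowerSeries.coeff_mul, PowerSeries.coeff_mul]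
  apply Finset.sum_congr rfl
  intro x hx
  rw [Finset.HasAntidiagonal.mem_antidiagonal] at hx
  rw [h1 x.1 (by omega), h2 x.2 (by omega)]

lemma Agr.pow {n : ℕ} {F G : PowerSeries R} (h : Agr n F G) (k : ℕ) : Agr n (F^k) (G^k) := by
  induction k with
  | zero => simpa using Agr.refl n 1
  | succ k ih => rw [pow_succ, pow_succ]; exact ih.mul h

lemma Agr_one_sub_pow (n e : ℕ) (he : n < e) : Agr n ((1 : PowerSeries R) - PowerSeries.X^e) 1 := by
  intro i hi
  rw [map_sub, PowerSeries.coeff_X_pow, if_neg (by omega), sub_zero]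

lemma Agr_prod_one (n : ℕ) (s : Finset ℕ) (g : ℕ → PowerSeries R)
    (hg : ∀ k ∈ s, Agr n (g k) 1) : Agr n (∏ k ∈ s, g k) 1 := by
  induction s using Finset.induction with
  | empty => simpa using Agr.refl n 1
  | insert _ _ hnotmem ih =>
    rename_i a s'
    rw [Finset.prod_insert hnotmem]
    have := (hg a (Finset.mem_insert_self a s')).mul
      (ih (fun k hk => hg k (Finset.mem_insert_of_mem hk)))
    simpa using this

lemma Agr_mul_one_right {n : ℕ} {F G T : PowerSeries R} (hT : Agr n T 1) (h : Agr n F (G * T)) :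
    Agr n F G := by
  intro i hi
  rw [h i hi]
  have := (Agr.refl n G).mul hT
  have h2 := this i hi
  rwa [mul_one] at h2

/-- products over larger ranges agree -/
lemma prod_agr (n : ℕ) (e : ℕ → ℕ) (hmono : ∀ k l, k ≤ l → e k ≤ e l)
    (M L : ℕ) (hML : M ≤ L) (he : n < e M) :
    Agr n (∏ k ∈ Finset.range L, ((1:PowerSeries R) - PowerSeries.X^(e k)))
      (∏ k ∈ Finset.range M, ((1:PowerSeries R) - PowerSeries.X^(e k))) := by
  rw [← Finset.prod_range_mul_prod_Ico _ hML]
  apply Agr_mul_one_right (T := ∏ k ∈ Finset.Ico M L, ((1:PowerSeries R) - PowerSeries.X^(e k)))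
  · apply Agr_prod_one
    intro k hk
    rw [Finset.mem_Ico] at hk
    exact Agr_one_sub_pow n (e k) (lt_of_lt_of_le he (hmono M k hk.1))
  · rw [mul_comm]
    exact Agr.refl n _

end Agr

/-- stabilization: `f m` agrees with a partial product -/
lemma f_agr (m n M : ℕ) (hm : 1 ≤ m) (h : n + 1 ≤ m * (M + 1)) :
    Agr n (f m) (∏ k ∈ Finset.range M, ((1:PowerSeries ℤ) - PowerSeries.X^(m*(k+1)))) := by
  intro i hi
  rw [f, PowerSeries.coeff_mk]
  set L := max (i+1) M with hL
  have hmono : ∀ k l, k ≤ l → m*(k+1) ≤ m*(l+1) := fun k l hkl => by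
    apply Nat.mul_le_mul_left; omega
  have h1 := prod_agr (R := ℤ) i (fun k => m*(k+1)) hmono (i+1) L (by omega)
    (by show i < m*(i+1+1); nlinarith)
  have h2 := prod_agr (R := ℤ) i (fun k => m*(k+1)) hmono M L (by omega)
    (by show i < m*(M+1); omega)
  rw [← h1 i le_rfl, h2 i le_rfl]

lemma prod_range_Ioc0 {M : Type*} [CommMonoid M] (g : ℕ → M) (N : ℕ) :
    ∏ k ∈ Finset.range N, g (k+1) = ∏ k ∈ Finset.Ioc 0 N, g k := by
  induction N with
  | zero => simp
  | succ N ih => rw [Finset.prod_range_succ, ih, Finset.prod_Ioc_succ_top (Nat.zero_le N)]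

lemma coe_prod (s : Finset ℕ) (g : ℕ → Polynomial ℤ) :
    ((∏ k ∈ s, g k : Polynomial ℤ) : PowerSeries ℤ) = ∏ k ∈ s, ((g k : Polynomial ℤ) : PowerSeries ℤ) := by
  induction s using Finset.induction with
  | empty => simp
  | insert _ _ hnm ih =>
    rename_i a s'
    rw [Finset.prod_insert hnm, Finset.prod_insert hnm, Polynomial.coe_mul, ih]

lemma coe_Pp (a b : ℕ) : ((Pp ℤ a b : Polynomial ℤ) : PowerSeries ℤ)
    = ∏ k ∈ Finset.Ioc a b, ((1:PowerSeries ℤ) - PowerSeries.X^k) := by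
  rw [Pp, coe_prod]
  apply Finset.prod_congr rfl
  intro k _
  push_cast
  rfl

noncomputable def Qp (a b : ℕ) : Polynomial ℤ := ∏ k ∈ Finset.Ioc a b, (1 + X^k)
noncomputable def P2 (a b : ℕ) : Polynomial ℤ := ∏ k ∈ Finset.Ioc a b, (1 - X^(2*k))

lemma coe_P2 (a b : ℕ) : ((P2 a b : Polynomial ℤ) : PowerSeries ℤ)
    = ∏ k ∈ Finset.Ioc a b, ((1:PowerSeries ℤ) - PowerSeries.X^(2*k)) := by
  rw [P2, coe_prod]
  apply Finset.prod_congr rfl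
  intro k _
  push_cast
  rfl

lemma PQ_merge (a b : ℕ) : Pp ℤ a b * Qp a b = P2 a b := by
  rw [Pp, Qp, P2, ← Finset.prod_mul_distrib]
  apply Finset.prod_congr rfl
  intro k _
  rw [show 2*k = k*2 from by ring, pow_mul]
  ring

lemma coeff_mul_deltaR (p q : Polynomial ℤ) (c : ℕ)
    (hq : ∀ i ≤ c, q.coeff i = if i = 0 then 1 else 0) (i : ℕ) (hi : i ≤ c) :
    (p * q).coeff i = p.coeff i := by
  rw [Polynomial.coeff_mul]
  have key : ∀ x ∈ Finset.HasAntidiagonal.antidiagonal i, p.coeff x.1 * q.coeff x.2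
      = if (i, 0) = x then p.coeff i else 0 := by
    intro x hx
    rw [Finset.HasAntidiagonal.mem_antidiagonal] at hx
    rw [hq x.2 (by omega)]
    rcases x with ⟨x1, x2⟩
    by_cases h2 : x2 = 0
    · have : x1 = i := by omega
      subst this; subst h2; simp
    · rw [if_neg h2, if_neg (by simp [Prod.ext_iff]; intro _; omega), mul_zero]
  rw [Finset.sum_congr rfl key, Finset.sum_ite_eq]
  simp

lemma GPOLY' (i N : ℕ) (h : i + 1 ≤ N) :
    (Pp ℤ 0 (2*N) * Qp 0 N * Qp 0 (N-1)).coeff i = tc i := by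
  obtain ⟨N', rfl⟩ : ∃ N', N = N' + 1 := ⟨N - 1, by omega⟩
  have h0 := GPOLY i (N'+1) h
  have hsplit : ∏ k ∈ Finset.range (N'+1), ((1:Polynomial ℤ)+X^k) = Qp 0 N' * C 2 := by
    rw [Finset.prod_range_succ', prod_range_Ioc0 (fun k => (1:Polynomial ℤ)+X^k) N']
    rw [Qp]
    rw [show ((1:Polynomial ℤ) + X^0) = C 2 from by norm_num]
  rw [hsplit, ← mul_assoc, Polynomial.coeff_mul_C] at h0
  have : (Pp ℤ 0 (2 * (N' + 1)) * Qp 0 (N' + 1) * Qp 0 N').coeff i * 2 = 2 * tc i := h0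
  simp only [show (N'+1)-1 = N' from by omega]
  omega

theorem gaussZ : f 1 * PowerSeries.mk (fun n => tc n) = f 2 ^ 2 := by
  apply PowerSeries.ext; intro n
  have h1 : Agr n (f 1) (∏ k ∈ Finset.range (n+1), ((1:PowerSeries ℤ) - PowerSeries.X^(1*(k+1)))) :=
    f_agr 1 n (n+1) le_rfl (by omega)
  have hmk : Agr n (PowerSeries.mk (fun n => tc n))
      ((Pp ℤ 0 (2*(n+1)) * Qp 0 (n+1) * Qp 0 n : Polynomial ℤ) : PowerSeries ℤ) := by
    intro i hi
    rw [PowerSeries.coeff_mk, Polynomial.coeff_coe,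
      show (Pp ℤ 0 (2*(n+1)) * Qp 0 (n+1) * Qp 0 n) = (Pp ℤ 0 (2*(n+1)) * Qp 0 (n+1) * Qp 0 ((n+1)-1)) from by norm_num,
      GPOLY' i (n+1) (by omega)]
  have hcoe1 : (∏ k ∈ Finset.range (n+1), ((1:PowerSeries ℤ) - PowerSeries.X^(1*(k+1))))
      = ((Pp ℤ 0 (n+1) : Polynomial ℤ) : PowerSeries ℤ) := by
    rw [coe_Pp, ← prod_range_Ioc0 (fun k => (1:PowerSeries ℤ) - PowerSeries.X^k) (n+1)]
    apply Finset.prod_congr rfl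
    intro k _
    rw [one_mul]
  have hL := (h1.mul hmk) n le_rfl
  rw [hcoe1, ← Polynomial.coe_mul] at hL
  have hpoly : Pp ℤ 0 (n+1) * (Pp ℤ 0 (2*(n+1)) * Qp 0 (n+1) * Qp 0 n)
      = (P2 0 (n+1) * P2 0 n) * Pp ℤ n (2*(n+1)) := by
    rw [Pp_split 0 n (2*(n+1)) (by omega) (by omega), ← PQ_merge, ← PQ_merge]
    ring
  rw [hpoly] at hL
  rw [hL, Polynomial.coeff_coe,
    coeff_mul_deltaR _ _ n (fun i hi => Pp_coeff_low n (2*(n+1)) i hi) n le_rfl]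
  -- RHS
  have h2a : Agr n (f 2) ((P2 0 (n+1) : Polynomial ℤ) : PowerSeries ℤ) := by
    have := f_agr 2 n (n+1) (by omega) (by omega)
    intro i hi
    rw [this i hi, coe_P2, ← prod_range_Ioc0 (fun k => (1:PowerSeries ℤ) - PowerSeries.X^(2*k)) (n+1)]
  have h2b : Agr n (f 2) ((P2 0 n : Polynomial ℤ) : PowerSeries ℤ) := by
    have := f_agr 2 n n (by omega) (by omega)
    intro i hi
    rw [this i hi, coe_P2, ← prod_range_Ioc0 (fun k => (1:PowerSeries ℤ) - PowerSeries.X^(2*k)) n]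
  have hR : PowerSeries.coeff n (f 2 ^ 2)
      = (P2 0 (n+1) * P2 0 n).coeff n := by
    rw [show f 2 ^ 2 = f 2 * f 2 from by ring]
    rw [(h2a.mul h2b) n le_rfl, ← Polynomial.coe_mul, Polynomial.coeff_coe]
  rw [hR]

noncomputable def jc2 (m : ℕ) : ℤ := if 2 ∣ m then jc (m/2) else 0

lemma expand_Pp (a b : ℕ) : Polynomial.expand ℤ 2 (Pp ℤ a b) = P2 a b := by
  rw [Pp, P2, map_prod]
  apply Finset.prod_congr rfl
  intro k _
  rw [map_sub, map_one, map_pow, Polynomial.expand_X, ← pow_mul, mul_comm]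

theorem jacobiZ : f 2 ^ 3 = PowerSeries.mk (fun m => jc2 m) := by
  apply PowerSeries.ext; intro m
  have hA : Agr m (f 2) ((P2 0 (2*(m+2)) : Polynomial ℤ) : PowerSeries ℤ) := by
    have := f_agr 2 m (2*(m+2)) (by omega) (by omega)
    intro i hi
    rw [this i hi, coe_P2, ← prod_range_Ioc0 (fun k => (1:PowerSeries ℤ) - PowerSeries.X^(2*k)) _]
  have hB : Agr m (f 2) ((P2 0 (m+2) : Polynomial ℤ) : PowerSeries ℤ) := by
    have := f_agr 2 m (m+2) (by omega) (by omega)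
    intro i hi
    rw [this i hi, coe_P2, ← prod_range_Ioc0 (fun k => (1:PowerSeries ℤ) - PowerSeries.X^(2*k)) _]
  have hC : Agr m (f 2) ((P2 0 (m+1) : Polynomial ℤ) : PowerSeries ℤ) := by
    have := f_agr 2 m (m+1) (by omega) (by omega)
    intro i hi
    rw [this i hi, coe_P2, ← prod_range_Ioc0 (fun k => (1:PowerSeries ℤ) - PowerSeries.X^(2*k)) _]
  have hL := ((hA.mul hB).mul hC) m le_rfl
  rw [show f 2 * f 2 * f 2 = f 2 ^ 3 from by ring, ← Polynomial.coe_mul, ← Polynomial.coe_mul,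
    Polynomial.coeff_coe] at hL
  rw [hL]
  rw [← expand_Pp, ← expand_Pp, ← expand_Pp, ← map_mul, ← map_mul,
    Polynomial.coeff_expand (by norm_num)]
  rw [PowerSeries.coeff_mk, jc2]
  by_cases hdvd : 2 ∣ m
  · rw [if_pos hdvd, if_pos hdvd]
    have := JPOLY (m/2) (m+1) (by omega)
    rw [show 2*(m+1+1) = 2*(m+2) from by ring] at this
    rw [this]
  · rw [if_neg hdvd, if_neg hdvd]

/-! ### mod 7 layer -/

instance charp_ps {R : Type*} [CommRing R] {p : ℕ} [CharP R p] : CharP (PowerSeries R) p := by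
  constructor
  intro x
  constructor
  · intro h
    have h2 := congrArg (PowerSeries.constantCoeff) h
    rw [map_natCast, map_zero] at h2
    exact (CharP.cast_eq_zero_iff R p x).mp h2
  · intro h
    have hx : ((x : ℕ) : R) = 0 := (CharP.cast_eq_zero_iff R p x).mpr h
    rw [← map_natCast (PowerSeries.C) x, hx, map_zero]

abbrev K : Type := ZMod 7

def ic : ℤ →+* K := Int.castRingHom K

lemma NT (j k n : ℕ) (h : 2 * Tz (j:ℤ) + Tz (k:ℤ) = 7*n+4) : (7:ℤ) ∣ (2*(j:ℤ)+1) := by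
  have hj := Tz_two_mul (j:ℤ)
  have hk := Tz_two_mul (k:ℤ)
  have hZ : 2 * ((Tz (j:ℤ) : ℤ)) + (Tz (k:ℤ) : ℤ) = 7*(n:ℤ)+4 := by exact_mod_cast h
  have key : 2*(2*(j:ℤ)+1)^2 + (2*(k:ℤ)+1)^2 = 7*(8*(n:ℤ)+5) := by
    linear_combination (-8:ℤ)*hj + (-4:ℤ)*hk + 8*hZ
  have hz : (2 : K) * (((2*(j:ℤ)+1 : ℤ) : K))^2 + (((2*(k:ℤ)+1 : ℤ) : K))^2 = 0 := by
    have hc := congrArg (Int.cast : ℤ → K) key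
    push_cast at hc ⊢
    rw [hc, show ((7:K)) = 0 from by decide]
    ring
  have hdec : ∀ x y : K, 2*x^2 + y^2 = 0 → x = 0 := by decide
  have hx := hdec _ _ hz
  have : ((2*(j:ℤ)+1 : ℤ) : K) = 0 := by push_cast; exact_mod_cast hx
  exact_mod_cast (ZMod.intCast_zmod_eq_zero_iff_dvd _ 7).mp this

lemma f_coeff_zero (m : ℕ) (hm : 1 ≤ m) : PowerSeries.coeff 0 (f m) = 1 := by
  rw [f, PowerSeries.coeff_mk, Finset.prod_range_one, map_sub, PowerSeries.coeff_X_pow,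
    if_neg (by omega)]
  simp

lemma coeff_X_pow_mul_ite (φ : PowerSeries ℤ) (e l : ℕ) :
    PowerSeries.coeff l (PowerSeries.X^e * φ)
      = if e ≤ l then PowerSeries.coeff (l - e) φ else 0 := by
  by_cases h : e ≤ l
  · rw [if_pos h, show l = (l - e) + e from by omega, PowerSeries.coeff_X_pow_mul,
      show l - e + e - e = l - e from by omega]
  · rw [if_neg h, PowerSeries.coeff_mul]
    apply Finset.sum_eq_zero
    intro x hx
    rw [Finset.HasAntidiagonal.mem_antidiagonal] at hx
    rw [PowerSeries.coeff_X_pow, if_neg (by omega), zero_mul]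

lemma coeff_prod_div (d : ℕ) (s : Finset ℕ) (e : ℕ → ℕ) (he : ∀ k ∈ s, d ∣ e k) :
    ∀ (l : ℕ), ¬ d ∣ l →
    PowerSeries.coeff l (∏ k ∈ s, ((1:PowerSeries ℤ) - PowerSeries.X ^ (e k))) = 0 := by
  induction s using Finset.induction with
  | empty =>
    intro l hl
    have hne : l ≠ 0 := fun h => hl (h ▸ dvd_zero d)
    simp [PowerSeries.coeff_one, hne]
  | insert _ _ hnm ih =>
    rename_i b s'
    intro l hl
    rw [Finset.prod_insert hnm, sub_mul, one_mul, map_sub]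
    rw [ih (fun k hk => he k (Finset.mem_insert_of_mem hk)) l hl, coeff_X_pow_mul_ite]
    have hdb : d ∣ e b := he b (Finset.mem_insert_self b s')
    by_cases hle : e b ≤ l
    · rw [if_pos hle, ih (fun k hk => he k (Finset.mem_insert_of_mem hk)) (l - e b) (by
        intro hcon
        apply hl
        have := Nat.dvd_add hcon hdb
        rwa [Nat.sub_add_cancel hle] at this)]
      ring
    · rw [if_neg hle]; ring

lemma map_partial (m N : ℕ) :
    PowerSeries.map ic (∏ k ∈ Finset.range N, ((1:PowerSeries ℤ) - PowerSeries.X^(m*(k+1))))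
      = ∏ k ∈ Finset.range N, ((1:PowerSeries K) - PowerSeries.X^(m*(k+1))) := by
  rw [map_prod]
  apply Finset.prod_congr rfl
  intro k _
  rw [map_sub, map_one, map_pow, PowerSeries.map_X]

lemma frob (m : ℕ) (hm : 1 ≤ m) :
    (PowerSeries.map ic (f m))^7 = PowerSeries.map ic (f (7*m)) := by
  haveI : Fact (Nat.Prime 7) := ⟨by norm_num⟩
  apply PowerSeries.ext; intro n
  have h1 : Agr n (PowerSeries.map ic (f m))
      (∏ k ∈ Finset.range (n+1), ((1:PowerSeries K) - PowerSeries.X^(m*(k+1)))) := by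
    intro i hi
    rw [PowerSeries.coeff_map, f_agr m n (n+1) hm (by nlinarith) i hi, ← map_partial,
      PowerSeries.coeff_map]
  have h4 : Agr n (PowerSeries.map ic (f (7*m)))
      (∏ k ∈ Finset.range (n+1), ((1:PowerSeries K) - PowerSeries.X^(7*m*(k+1)))) := by
    intro i hi
    rw [PowerSeries.coeff_map, f_agr (7*m) n (n+1) (by omega) (by nlinarith) i hi, ← map_partial,
      PowerSeries.coeff_map]
  rw [(h1.pow 7) n le_rfl, h4 n le_rfl]
  congr 1
  rw [← Finset.prod_pow]
  apply Finset.prod_congr rfl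
  intro k _
  rw [sub_pow_char, one_pow, ← pow_mul]
  congr 2
  ring

theorem final (a : ℕ → ℤ)
    (ha : PowerSeries.mk a * (f 1 * (f 2) ^ 2) = 1) :
    ∀ n : ℕ, (7 : ℤ) ∣ a (7 * n + 4) := by
  haveI : Fact (Nat.Prime 7) := ⟨by norm_num⟩
  set A := PowerSeries.map ic (PowerSeries.mk a) with hAdef
  set F1 := PowerSeries.map ic (f 1) with hF1
  set F2 := PowerSeries.map ic (f 2) with hF2
  set F7 := PowerSeries.map ic (f 7) with hF7d
  set F14 := PowerSeries.map ic (f 14) with hF14d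
  set Ψ := PowerSeries.map ic (PowerSeries.mk (fun n => tc n)) with hΨ
  set J := PowerSeries.map ic (PowerSeries.mk (fun m => jc2 m)) with hJ
  have hA : A * (F1 * F2^2) = 1 := by
    have := congrArg (PowerSeries.map ic) ha
    rw [map_mul, map_mul, map_pow, map_one] at this
    exact this
  have h7 : F1^7 = F7 := by
    have h := frob 1 le_rfl
    norm_num at h
    rw [hF1, hF7d]; exact h
  have h14 : F2^7 = F14 := by
    have h := frob 2 (by omega)
    norm_num at h
    rw [hF2, hF14d]; exact h
  have hg : F1 * Ψ = F2^2 := by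
    rw [hF1, hΨ, hF2, ← map_mul, ← map_pow, gaussZ]
  have hj : F2^3 = J := by
    rw [hF2, hJ, ← map_pow, jacobiZ]
  have hkey : F7^3 * (A * F14) = F7^3 * (J * Ψ) := by
    rw [← h7, ← h14, ← hj]
    linear_combination (F1^20 * F2^5) * hA - (F1^20 * F2^3) * hg
  have hF7ne : (F7 : PowerSeries K)^3 ≠ 0 := by
    apply pow_ne_zero
    intro hcon
    have hcc : PowerSeries.coeff 0 F7 = 1 := by
      rw [hF7d, PowerSeries.coeff_map, f_coeff_zero 7 (by omega), map_one]
    rw [hcon, map_zero] at hcc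
    exact one_ne_zero hcc.symm
  have hfin : A * F14 = J * Ψ := mul_left_cancel₀ hF7ne hkey
  have hRHS : ∀ n : ℕ, PowerSeries.coeff (7*n+4) (J * Ψ) = 0 := by
    intro n
    rw [PowerSeries.coeff_mul]
    apply Finset.sum_eq_zero
    intro x hx
    rw [Finset.HasAntidiagonal.mem_antidiagonal] at hx
    rw [hJ, hΨ, PowerSeries.coeff_map, PowerSeries.coeff_map, PowerSeries.coeff_mk,
      PowerSeries.coeff_mk]
    by_cases htc : tc x.2 = 0
    · rw [htc, map_zero, mul_zero]
    · obtain ⟨k, hk⟩ : ∃ k : ℕ, Tz (k:ℤ) = x.2 := by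
        by_contra hcon
        push_neg at hcon
        apply htc
        rw [tc]
        apply Finset.sum_eq_zero
        intro k _
        rw [if_neg (hcon k)]
      suffices h : (7:ℤ) ∣ jc2 x.1 by
        rw [show ic (jc2 x.1) = 0 from (ZMod.intCast_zmod_eq_zero_iff_dvd _ 7).mpr
          (by exact_mod_cast h), zero_mul]
      rw [jc2]
      by_cases hd : 2 ∣ x.1
      · rw [if_pos hd, jc]
        apply Finset.dvd_sum
        intro j _
        by_cases hTz : Tz (j:ℤ) = x.1 / 2
        · rw [if_pos hTz]
          have hNT : (7:ℤ) ∣ (2*(j:ℤ)+1) := NT j k n (by omega)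
          exact Dvd.dvd.mul_left hNT _
        · rw [if_neg hTz]; exact dvd_zero 7
      · rw [if_neg hd]; exact dvd_zero 7
  have hsupp : ∀ l : ℕ, ¬ (14 ∣ l) → PowerSeries.coeff l F14 = 0 := by
    intro l hl
    rw [hF14d, PowerSeries.coeff_map, f, PowerSeries.coeff_mk,
      coeff_prod_div 14 (Finset.range (l+1)) (fun k => 14*(k+1)) (fun k _ => ⟨k+1, rfl⟩) l hl,
      map_zero]
  have hc0 : PowerSeries.coeff 0 F14 = 1 := by
    rw [hF14d, PowerSeries.coeff_map, f_coeff_zero 14 (by omega), map_one]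
  have hcoeffA : ∀ m : ℕ, PowerSeries.coeff m A = ((a m : ℤ) : K) := fun m => by
    rw [hAdef, PowerSeries.coeff_map, PowerSeries.coeff_mk]; rfl
  intro n
  induction n using Nat.strong_induction_on with
  | _ n ih =>
  suffices hsand : ((a (7*n+4) : ℤ) : ZMod 7) = 0 by
    exact_mod_cast (ZMod.intCast_zmod_eq_zero_iff_dvd _ 7).mp hsand
  have h0 := congrArg (PowerSeries.coeff (7*n+4)) hfin
  rw [hRHS n, PowerSeries.coeff_mul] at h0
  have hsum : ∑ p ∈ Finset.HasAntidiagonal.antidiagonal (7*n+4),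
      PowerSeries.coeff p.1 A * PowerSeries.coeff p.2 F14
      = PowerSeries.coeff (7*n+4) A * PowerSeries.coeff 0 F14 := by
    apply Finset.sum_eq_single ((7*n+4 : ℕ), (0:ℕ))
    · intro b hb hbne
      rw [Finset.HasAntidiagonal.mem_antidiagonal] at hb
      by_cases h14 : 14 ∣ b.2
      · obtain ⟨s, hs⟩ := h14
        have hs1 : 1 ≤ s := by
          rcases Nat.eq_zero_or_pos s with h0' | h0'
          · exfalso; apply hbne
            have : b.2 = 0 := by omega
            have : b.1 = 7*n+4 := by omega
            ext <;> simp [this, ‹b.2 = 0›]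
          · exact h0'
        have h2s : 2*s ≤ n := by omega
        have hb1 : b.1 = 7*(n-2*s)+4 := by omega
        rw [hcoeffA, hb1,
          show ((a (7*(n-2*s)+4) : ℤ) : K) = 0 from
            (ZMod.intCast_zmod_eq_zero_iff_dvd _ 7).mpr
              (by exact_mod_cast (ih (n-2*s) (by omega))), zero_mul]
      · rw [hsupp b.2 h14, mul_zero]
    · intro hnotmem
      exact absurd (Finset.HasAntidiagonal.mem_antidiagonal.mpr (by omega)) hnotmem
  rw [hsum, hc0, mul_one, hcoeffA] at h0
  exact h0

end
end GCP

/-- If `a : ℕ → ℤ` has generating function `∑ a(n) q^n = 1/(f 1 * (f 2)^2)`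
(i.e. `a = a_3`, counting partitions with even parts in 3 colors), then
`a_3(7n+4) ≡ 0 (mod 7)` for all `n ≥ 0`. -/
theorem statement0 (a : ℕ → ℤ)
    (ha : PowerSeries.mk a * (f 1 * (f 2) ^ 2) = 1) :
    ∀ n : ℕ, (7 : ℤ) ∣ a (7 * n + 4) := by
  exact GCP.final a ha
end

section
/- Euler's pentagonal number theorem: as formal power series, ∏_{n≥1}(1-q^n) = ∑_{n∈ℤ} (-1)^n q^{n(3n+1)/2}. -/
namespace PNTaux
open Finset


lemma mem_pos {S : Finset ℕ} (h0 : 0 ∉ S) {x : ℕ} (hx : x ∈ S) : 1 ≤ x :=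
  Nat.one_le_iff_ne_zero.mpr (fun e => h0 (e ▸ hx))

lemma sg_ex {S : Finset ℕ} (h : S.Nonempty) (h0 : 0 ∉ S) :
    ∃ t, S.max' h - (t + 1) ∉ S :=
  ⟨S.max' h, by rw [Nat.sub_eq_zero_of_le (Nat.le_succ _)]; exact h0⟩

/-- The staircase length at the top of `S`: least `σ ≥ 1` with `max' S - σ ∉ S`. -/
noncomputable def sg (S : Finset ℕ) (h : S.Nonempty) (h0 : 0 ∉ S) : ℕ :=
  Nat.find (sg_ex h h0) + 1

lemma sg_pos {S : Finset ℕ} (h : S.Nonempty) (h0 : 0 ∉ S) : 1 ≤ sg S h h0 :=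
  Nat.le_add_left 1 _

lemma sg_notMem {S : Finset ℕ} (h : S.Nonempty) (h0 : 0 ∉ S) :
    S.max' h - sg S h h0 ∉ S := Nat.find_spec (sg_ex h h0)

lemma sg_mem {S : Finset ℕ} (h : S.Nonempty) (h0 : 0 ∉ S) {t : ℕ}
    (h1 : 1 ≤ t) (h2 : t < sg S h h0) : S.max' h - t ∈ S := by
  have hs : sg S h h0 = Nat.find (sg_ex h h0) + 1 := rfl
  have := Nat.find_min (sg_ex h h0) (m := t - 1) (by omega)
  simp only [not_not] at this
  have e : t - 1 + 1 = t := by omega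
  rwa [e] at this

lemma sg_le {S : Finset ℕ} (h : S.Nonempty) (h0 : 0 ∉ S) : sg S h h0 ≤ S.max' h := by
  have hM : 1 ≤ S.max' h := mem_pos h0 (S.max'_mem h)
  have : Nat.find (sg_ex h h0) ≤ S.max' h - 1 := by
    apply Nat.find_le
    rw [show S.max' h - 1 + 1 = S.max' h by omega, Nat.sub_self]
    exact h0
  unfold sg; omega

lemma stair_mem {S : Finset ℕ} (h : S.Nonempty) (h0 : 0 ∉ S) {i : ℕ}
    (h1 : S.max' h - sg S h h0 < i) (h2 : i ≤ S.max' h) : i ∈ S := by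
  rcases eq_or_lt_of_le h2 with rfl | hlt
  · exact S.max'_mem h
  · have hσ := sg_le h h0
    have h1' : 1 ≤ S.max' h - i := by omega
    have h2' : S.max' h - i < sg S h h0 := by omega
    have := sg_mem h h0 h1' h2'
    rwa [show S.max' h - (S.max' h - i) = i by omega] at this

lemma sg_eq {S : Finset ℕ} (h : S.Nonempty) (h0 : 0 ∉ S) {k : ℕ} (hk : 1 ≤ k)
    (hnm : S.max' h - k ∉ S) (hm : ∀ t, 1 ≤ t → t < k → S.max' h - t ∈ S) :
    sg S h h0 = k := by
  have : Nat.find (sg_ex h h0) = k - 1 := by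
    rw [Nat.find_eq_iff]
    constructor
    · rwa [show k - 1 + 1 = k by omega]
    · intro n hn
      simp only [not_not]
      exact hm (n + 1) (by omega) (by omega)
  unfold sg; omega

lemma sg_ge {S : Finset ℕ} (h : S.Nonempty) (h0 : 0 ∉ S) {k : ℕ}
    (hm : ∀ t, 1 ≤ t → t ≤ k → S.max' h - t ∈ S) : k < sg S h h0 := by
  have : k ≤ Nat.find (sg_ex h h0) := by
    rw [Nat.le_find_iff]
    intro n hn
    simp only [not_not]
    exact hm (n + 1) (by omega) (by omega)
  unfold sg; omega

lemma min_add_sg_le {S : Finset ℕ} (h : S.Nonempty) (h0 : 0 ∉ S) :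
    S.min' h + sg S h h0 ≤ S.max' h + 1 := by
  have hσ1 := sg_pos h h0
  have hσM := sg_le h h0
  have : S.max' h - (sg S h h0 - 1) ∈ S := by
    rcases eq_or_lt_of_le hσ1 with he | hlt
    · rw [show sg S h h0 - 1 = 0 by omega]; simpa using S.max'_mem h
    · exact sg_mem h h0 (by omega) (by omega)
  have := S.min'_le _ this
  omega

/-- Case A move of Franklin's involution. -/
def phiA (S : Finset ℕ) (s M : ℕ) : Finset ℕ := insert (M + 1) ((S.erase s).erase (M + 1 - s))

/-- Case B move of Franklin's involution. -/
def phiB (S : Finset ℕ) (σ M : ℕ) : Finset ℕ := insert σ (insert (M - σ) (S.erase M))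

/-- Franklin's involution. -/
noncomputable def phi (S : Finset ℕ) : Finset ℕ :=
  if h : S.Nonempty ∧ 0 ∉ S then
    if S.min' h.1 ≤ sg S h.1 h.2 then
      (if S.max' h.1 + 1 = 2 * S.min' h.1 then S else phiA S (S.min' h.1) (S.max' h.1))
    else
      (if S.max' h.1 = 2 * sg S h.1 h.2 then S else phiB S (sg S h.1 h.2) (S.max' h.1))
  else S

lemma phi_eq {S : Finset ℕ} (h : S.Nonempty) (h0 : 0 ∉ S) :
    phi S = if S.min' h ≤ sg S h h0 then
      (if S.max' h + 1 = 2 * S.min' h then S else phiA S (S.min' h) (S.max' h))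
    else
      (if S.max' h = 2 * sg S h h0 then S else phiB S (sg S h h0) (S.max' h)) := by
  unfold phi
  rw [dif_pos ⟨h, h0⟩]

lemma caseA {S : Finset ℕ} (h : S.Nonempty) (h0 : 0 ∉ S)
    (hsσ : S.min' h ≤ sg S h h0) (hne : S.max' h + 1 ≠ 2 * S.min' h) :
    phi S = phiA S (S.min' h) (S.max' h) ∧
    (∑ x ∈ phiA S (S.min' h) (S.max' h), x) = ∑ x ∈ S, x ∧
    0 ∉ phiA S (S.min' h) (S.max' h) ∧
    (phiA S (S.min' h) (S.max' h)).card + 1 = S.card ∧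
    phi (phiA S (S.min' h) (S.max' h)) = S := by
  set s := S.min' h with hs
  set M := S.max' h with hM
  set σ := sg S h h0 with hσ
  set r := M + 1 - s with hr
  have hs1 : 1 ≤ s := mem_pos h0 (S.min'_mem h)
  have hssg := min_add_sg_le h h0
  have hσM := sg_le h h0
  have hσ1 := sg_pos h h0
  have h2s : 2 * s ≤ M := by omega
  have hMax : ∀ x ∈ S, x ≤ M := fun x hx => S.le_max' x hx
  have hMin : ∀ x ∈ S, s ≤ x := fun x hx => S.min'_le x hx
  have hr_mem : r ∈ S := stair_mem h h0 (by omega) (by omega)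
  have hrE : r ∈ S.erase s := mem_erase.mpr ⟨by omega, hr_mem⟩
  have hM1 : M + 1 ∉ (S.erase s).erase r := fun hmem => by
    have := hMax _ (mem_of_mem_erase (mem_of_mem_erase hmem)); omega
  set T := phiA S s M with hT
  have hTsum : (∑ x ∈ T, x) = ∑ x ∈ S, x := by
    have e1 : (∑ x ∈ T, x) = (M + 1) + ∑ x ∈ (S.erase s).erase r, x := by
      rw [hT, phiA, sum_insert hM1]
    have e2 : (∑ x ∈ (S.erase s).erase r, x) + r = ∑ x ∈ S.erase s, x :=
      Finset.sum_erase_add _ _ hrE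
    have e3 : (∑ x ∈ S.erase s, x) + s = ∑ x ∈ S, x :=
      Finset.sum_erase_add _ _ (S.min'_mem h)
    omega
  have hTcard : T.card + 1 = S.card := by
    have c1 : T.card = ((S.erase s).erase r).card + 1 := card_insert_of_notMem hM1
    have c2 : ((S.erase s).erase r).card = (S.erase s).card - 1 := card_erase_of_mem hrE
    have c3 : (S.erase s).card = S.card - 1 := card_erase_of_mem (S.min'_mem h)
    have c4 : 0 < (S.erase s).card := card_pos.mpr ⟨r, hrE⟩
    have c5 : 0 < S.card := card_pos.mpr h
    omega
  have hT0 : 0 ∉ T := by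
    rw [hT, phiA]
    intro hc
    rcases mem_insert.mp hc with e | e
    · omega
    · exact h0 (mem_of_mem_erase (mem_of_mem_erase e))
  have hTne : T.Nonempty := insert_nonempty _ _
  have hTle : ∀ x ∈ T, x ≤ M + 1 := by
    intro x hx
    rcases mem_insert.mp hx with e | e
    · omega
    · have := hMax _ (mem_of_mem_erase (mem_of_mem_erase e)); omega
  have hTmax : T.max' hTne = M + 1 :=
    le_antisymm (max'_le _ _ _ hTle) (le_max' _ _ (mem_insert_self _ _))
  have hTgt : ∀ x ∈ T, s < x := by
    intro x hx
    rcases mem_insert.mp hx with e | e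
    · omega
    · rcases mem_erase.mp e with ⟨hx1, hx2⟩
      rcases mem_erase.mp hx2 with ⟨hx3, hx4⟩
      have := hMin _ hx4; omega
  have hTmin : s < T.min' hTne := hTgt _ (T.min'_mem hTne)
  have hstair : ∀ t, 1 ≤ t → t < s → M + 1 - t ∈ T := by
    intro t ht1 ht2
    have hmem : M + 1 - t ∈ S := stair_mem h h0 (by omega) (by omega)
    rw [hT, phiA]
    apply mem_insert_of_mem
    exact mem_erase.mpr ⟨by omega, mem_erase.mpr ⟨by omega, hmem⟩⟩
  have hTsg : sg T hTne hT0 = s := by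
    apply sg_eq hTne hT0 hs1
    · rw [hTmax]
      intro hc
      rcases mem_insert.mp hc with e | e
      · omega
      · exact (notMem_erase _ _) (by rwa [show M + 1 - s = r from rfl] at e)
    · intro t ht1 ht2
      rw [hTmax]
      exact hstair t ht1 ht2
  have hphiT : phi T = S := by
    rw [phi_eq hTne hT0, hTsg, hTmax]
    rw [if_neg (by omega), if_neg (by omega)]
    rw [phiB, hT, phiA]
    rw [erase_insert hM1]
    rw [show M + 1 - s = r from rfl, insert_erase hrE, insert_erase (S.min'_mem h)]
  refine ⟨?_, hTsum, hT0, hTcard, hphiT⟩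
  rw [phi_eq h h0, if_pos hsσ, if_neg hne]

lemma caseB {S : Finset ℕ} (h : S.Nonempty) (h0 : 0 ∉ S)
    (hσs : sg S h h0 < S.min' h) (hne : S.max' h ≠ 2 * sg S h h0) :
    phi S = phiB S (sg S h h0) (S.max' h) ∧
    (∑ x ∈ phiB S (sg S h h0) (S.max' h), x) = ∑ x ∈ S, x ∧
    0 ∉ phiB S (sg S h h0) (S.max' h) ∧
    (phiB S (sg S h h0) (S.max' h)).card = S.card + 1 ∧
    phi (phiB S (sg S h h0) (S.max' h)) = S := by
  set s := S.min' h with hs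
  set M := S.max' h with hM
  set σ := sg S h h0 with hσ
  have hs1 : 1 ≤ s := mem_pos h0 (S.min'_mem h)
  have hssg := min_add_sg_le h h0
  have hσM := sg_le h h0
  have hσ1 := sg_pos h h0
  have h2σ : 2 * σ < M := by omega
  have hMax : ∀ x ∈ S, x ≤ M := fun x hx => S.le_max' x hx
  have hMin : ∀ x ∈ S, s ≤ x := fun x hx => S.min'_le x hx
  have hMmem : M ∈ S := S.max'_mem h
  have hMσ_nm : M - σ ∉ S := sg_notMem h h0
  have hσ_nm : σ ∉ S := fun hc => by have := hMin _ hc; omega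
  have hMσE : M - σ ∉ S.erase M := fun hc => hMσ_nm (mem_of_mem_erase hc)
  have hσI : σ ∉ insert (M - σ) (S.erase M) := by
    intro hc
    rcases mem_insert.mp hc with e | e
    · omega
    · exact hσ_nm (mem_of_mem_erase e)
  set T := phiB S σ M with hT
  have hTsum : (∑ x ∈ T, x) = ∑ x ∈ S, x := by
    have e1 : (∑ x ∈ T, x) = σ + ((M - σ) + ∑ x ∈ S.erase M, x) := by
      rw [hT, phiB, sum_insert hσI, sum_insert hMσE]
    have e2 : (∑ x ∈ S.erase M, x) + M = ∑ x ∈ S, x := Finset.sum_erase_add _ _ hMmem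
    omega
  have hTcard : T.card = S.card + 1 := by
    have c1 : T.card = (insert (M - σ) (S.erase M)).card + 1 := card_insert_of_notMem hσI
    have c2 : (insert (M - σ) (S.erase M)).card = (S.erase M).card + 1 :=
      card_insert_of_notMem hMσE
    have c3 : (S.erase M).card = S.card - 1 := card_erase_of_mem hMmem
    have c5 : 0 < S.card := card_pos.mpr h
    omega
  have hT0 : 0 ∉ T := by
    rw [hT, phiB]
    intro hc
    rcases mem_insert.mp hc with e | e
    · omega
    · rcases mem_insert.mp e with e' | e'
      · omega
      · exact h0 (mem_of_mem_erase e')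
  have hTne : T.Nonempty := insert_nonempty _ _
  have hTle : ∀ x ∈ T, x ≤ M - 1 := by
    intro x hx
    rcases mem_insert.mp hx with e | e
    · omega
    · rcases mem_insert.mp e with e' | e'
      · omega
      · rcases mem_erase.mp e' with ⟨hx1, hx2⟩
        have := hMax _ hx2; omega
  have hM1T : M - 1 ∈ T := by
    rcases eq_or_lt_of_le hσ1 with he | hlt
    · rw [hT, phiB]
      apply mem_insert_of_mem
      rw [show M - σ = M - 1 by omega]
      exact mem_insert_self _ _
    · have : M - 1 ∈ S := sg_mem h h0 (by omega) (by omega)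
      rw [hT, phiB]
      exact mem_insert_of_mem (mem_insert_of_mem (mem_erase.mpr ⟨by omega, this⟩))
  have hTmax : T.max' hTne = M - 1 :=
    le_antisymm (max'_le _ _ _ hTle) (le_max' _ _ hM1T)
  have hTmin : T.min' hTne = σ := by
    apply le_antisymm (min'_le _ _ (mem_insert_self _ _))
    · apply le_min'
      intro x hx
      rcases mem_insert.mp hx with e | e
      · omega
      · rcases mem_insert.mp e with e' | e'
        · omega
        · have := hMin _ (mem_of_mem_erase e'); omega
  have hTsg : σ ≤ sg T hTne hT0 := by
    have hp := sg_pos hTne hT0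
    rcases eq_or_lt_of_le hσ1 with he | hlt
    · omega
    · have := sg_ge hTne hT0 (k := σ - 1) ?_
      · omega
      · intro t ht1 ht2
        rw [hTmax]
        rcases eq_or_lt_of_le (show t + 1 ≤ σ by omega) with he' | hlt'
        · rw [hT, phiB]
          apply mem_insert_of_mem
          rw [show M - 1 - t = M - σ by omega]
          exact mem_insert_self _ _
        · have : M - (t + 1) ∈ S := sg_mem h h0 (by omega) (by omega)
          rw [hT, phiB, show M - 1 - t = M - (t + 1) by omega]
          exact mem_insert_of_mem (mem_insert_of_mem (mem_erase.mpr ⟨by omega, this⟩))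
  have hphiT : phi T = S := by
    rw [phi_eq hTne hT0, hTmin, hTmax]
    rw [if_pos hTsg, if_neg (by omega)]
    rw [phiA, hT, phiB]
    rw [show M - 1 + 1 - σ = M - σ by omega, show M - 1 + 1 = M by omega]
    rw [erase_insert hσI, erase_insert hMσE, insert_erase hMmem]
  refine ⟨?_, hTsum, hT0, hTcard, hphiT⟩
  rw [phi_eq h h0, if_neg (by omega), if_neg hne]

lemma phi_fix_iff {S : Finset ℕ} (h : S.Nonempty) (h0 : 0 ∉ S) :
    phi S = S ↔ ((S.min' h ≤ sg S h h0 ∧ S.max' h + 1 = 2 * S.min' h) ∨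
      (sg S h h0 < S.min' h ∧ S.max' h = 2 * sg S h h0)) := by
  constructor
  · intro hfix
    by_cases hc : S.min' h ≤ sg S h h0
    · by_cases he : S.max' h + 1 = 2 * S.min' h
      · exact Or.inl ⟨hc, he⟩
      · exfalso
        obtain ⟨h1, _, _, h4, _⟩ := caseA h h0 hc he
        rw [hfix] at h1
        have := congrArg Finset.card h1
        omega
    · by_cases he : S.max' h = 2 * sg S h h0
      · exact Or.inr ⟨by omega, he⟩
      · exfalso
        obtain ⟨h1, _, _, h4, _⟩ := caseB h h0 (by omega) he
        rw [hfix] at h1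
        have := congrArg Finset.card h1
        omega
  · intro hc
    rw [phi_eq h h0]
    rcases hc with ⟨h1, h2⟩ | ⟨h1, h2⟩
    · rw [if_pos h1, if_pos h2]
    · rw [if_neg (by omega), if_pos h2]

lemma fix_classify {S : Finset ℕ} (h : S.Nonempty) (h0 : 0 ∉ S) (hfix : phi S = S) :
    (∃ m, 1 ≤ m ∧ S = Finset.Icc m (2 * m - 1)) ∨
      (∃ m, 1 ≤ m ∧ S = Finset.Icc (m + 1) (2 * m)) := by
  have hs1 : 1 ≤ S.min' h := mem_pos h0 (S.min'_mem h)
  have hssg := min_add_sg_le h h0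
  have hσM := sg_le h h0
  have hσ1 := sg_pos h h0
  have hMax : ∀ x ∈ S, x ≤ S.max' h := fun x hx => S.le_max' x hx
  have hMin : ∀ x ∈ S, S.min' h ≤ x := fun x hx => S.min'_le x hx
  rcases (phi_fix_iff h h0).mp hfix with ⟨h1, h2⟩ | ⟨h1, h2⟩
  · refine Or.inl ⟨S.min' h, hs1, ?_⟩
    ext x
    rw [mem_Icc]
    constructor
    · intro hx
      have := hMax _ hx; have := hMin _ hx; omega
    · rintro ⟨hx1, hx2⟩
      exact stair_mem h h0 (by omega) (by omega)
  · refine Or.inr ⟨sg S h h0, hσ1, ?_⟩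
    ext x
    rw [mem_Icc]
    constructor
    · intro hx
      have := hMax _ hx; have := hMin _ hx; omega
    · rintro ⟨hx1, hx2⟩
      exact stair_mem h h0 (by omega) (by omega)

lemma Icc_min' {a b : ℕ} (hab : a ≤ b) (hne : (Finset.Icc a b).Nonempty) :
    (Finset.Icc a b).min' hne = a :=
  le_antisymm (min'_le _ _ (mem_Icc.mpr ⟨le_refl a, hab⟩))
    (le_min' _ _ _ (fun x hx => (mem_Icc.mp hx).1))

lemma Icc_max' {a b : ℕ} (hab : a ≤ b) (hne : (Finset.Icc a b).Nonempty) :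
    (Finset.Icc a b).max' hne = b :=
  le_antisymm (max'_le _ _ _ (fun x hx => (mem_Icc.mp hx).2))
    (le_max' _ _ (mem_Icc.mpr ⟨hab, le_refl b⟩))

lemma fixedA (m : ℕ) (hm : 1 ≤ m) :
    phi (Finset.Icc m (2 * m - 1)) = Finset.Icc m (2 * m - 1) := by
  have hab : m ≤ 2 * m - 1 := by omega
  have hne : (Finset.Icc m (2 * m - 1)).Nonempty := ⟨m, mem_Icc.mpr ⟨le_refl _, hab⟩⟩
  have h0 : 0 ∉ Finset.Icc m (2 * m - 1) := by
    intro hc; have := (mem_Icc.mp hc).1; omega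
  have hmin := Icc_min' hab hne
  have hmax := Icc_max' hab hne
  have hsg : sg _ hne h0 = m := by
    apply sg_eq hne h0 hm
    · rw [hmax]; intro hc; have := mem_Icc.mp hc; omega
    · intro t ht1 ht2; rw [hmax]; exact mem_Icc.mpr ⟨by omega, by omega⟩
  rw [phi_eq hne h0, hmin, hmax, hsg, if_pos (by omega), if_pos (by omega)]

lemma fixedB (m : ℕ) (hm : 1 ≤ m) :
    phi (Finset.Icc (m + 1) (2 * m)) = Finset.Icc (m + 1) (2 * m) := by
  have hab : m + 1 ≤ 2 * m := by omega
  have hne : (Finset.Icc (m + 1) (2 * m)).Nonempty := ⟨m + 1, mem_Icc.mpr ⟨le_refl _, hab⟩⟩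
  have h0 : 0 ∉ Finset.Icc (m + 1) (2 * m) := by
    intro hc; have := (mem_Icc.mp hc).1; omega
  have hmin := Icc_min' hab hne
  have hmax := Icc_max' hab hne
  have hsg : sg _ hne h0 = m := by
    apply sg_eq hne h0 hm
    · rw [hmax]; intro hc; have := mem_Icc.mp hc; omega
    · intro t ht1 ht2; rw [hmax]; exact mem_Icc.mpr ⟨by omega, by omega⟩
  rw [phi_eq hne h0, hmin, hmax, hsg, if_neg (by omega), if_pos (by omega)]

lemma sumIcc (a b : ℕ) : (∑ i ∈ Finset.Icc a b, i) * 2 = (a + b) * (b + 1 - a) := by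
  rcases le_or_gt a b with hab | hab
  · rw [← Finset.Ico_add_one_right_eq_Icc, Finset.sum_Ico_eq_sum_range]
    obtain ⟨k, hk⟩ : ∃ k, b + 1 - a = k + 1 := ⟨b - a, by omega⟩
    have hb : b = a + k := by omega
    rw [hk]
    have h1 : (∑ i ∈ range (k + 1), (a + i)) =
        (k + 1) * a + ∑ i ∈ range (k + 1), i := by
      rw [Finset.sum_add_distrib, Finset.sum_const, smul_eq_mul, card_range]
    have h2 := Finset.sum_range_id_mul_two (k + 1)
    rw [h1, hb]
    simp only [Nat.add_sub_cancel] at h2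
    nlinarith [h2]
  · rw [Finset.Icc_eq_empty (by omega)]
    simp
    omega

open PowerSeries in
lemma coeff_f1 (N : ℕ) : (PowerSeries.coeff N) (f 1) =
    ∑ S ∈ (Finset.Icc 1 (N + 1)).powerset.filter (fun S => (∑ i ∈ S, i) = N),
      (-1 : ℤ) ^ S.card := by
  rw [f, PowerSeries.coeff_mk]
  simp only [one_mul]
  have hre : (∏ k ∈ range (N + 1), (1 - (X : PowerSeries ℤ) ^ (k + 1))) =
      ∏ j ∈ Finset.Icc 1 (N + 1), (1 - (X : PowerSeries ℤ) ^ j) := by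
    rw [show Finset.Icc 1 (N + 1) = (range (N + 1)).image (· + 1) by
      ext x
      simp only [mem_Icc, mem_image, mem_range]
      constructor
      · rintro ⟨h1, h2⟩; exact ⟨x - 1, by omega, by omega⟩
      · rintro ⟨a, ha, rfl⟩; omega]
    rw [Finset.prod_image (by intro a _ b _ hab; simp only at hab; omega)]
  rw [hre]
  have hexp : (∏ j ∈ Finset.Icc 1 (N + 1), (1 - (X : PowerSeries ℤ) ^ j)) =
      ∑ t ∈ (Finset.Icc 1 (N + 1)).powerset,
        PowerSeries.C ((-1) ^ t.card) * (X : PowerSeries ℤ) ^ (∑ i ∈ t, i) := by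
    have hpa := Finset.prod_add (fun j => -(X : PowerSeries ℤ) ^ j) (fun _ => (1 : PowerSeries ℤ))
      (Finset.Icc 1 (N + 1))
    simp only [prod_const_one, mul_one] at hpa
    calc (∏ j ∈ Finset.Icc 1 (N + 1), (1 - (X : PowerSeries ℤ) ^ j))
        = ∏ j ∈ Finset.Icc 1 (N + 1), (-(X : PowerSeries ℤ) ^ j + 1) := by
          apply prod_congr rfl; intro j _; ring
      _ = ∑ t ∈ (Finset.Icc 1 (N + 1)).powerset, ∏ j ∈ t, -(X : PowerSeries ℤ) ^ j := hpa
      _ = _ := by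
          apply sum_congr rfl
          intro t _
          calc (∏ j ∈ t, -(X : PowerSeries ℤ) ^ j)
              = ∏ j ∈ t, ((-1) * (X : PowerSeries ℤ) ^ j) := by
                apply prod_congr rfl; intro j _; ring
            _ = (-1 : PowerSeries ℤ) ^ t.card * ∏ j ∈ t, (X : PowerSeries ℤ) ^ j := by
                rw [prod_mul_distrib, prod_const]
            _ = PowerSeries.C ((-1) ^ t.card) * (X : PowerSeries ℤ) ^ (∑ i ∈ t, i) := by
                rw [prod_pow_eq_pow_sum, map_pow, map_neg, map_one]
  rw [hexp, map_sum]
  rw [Finset.sum_filter]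
  apply sum_congr rfl
  intro t _
  rw [PowerSeries.coeff_C_mul_X_pow]
  by_cases hc : (∑ i ∈ t, i) = N
  · rw [if_pos hc.symm, if_pos hc]
  · rw [if_neg (Ne.symm hc), if_neg hc]

def Dall (N : ℕ) : Finset (Finset ℕ) :=
  (Finset.Icc 1 (N + 1)).powerset.filter (fun S => (∑ i ∈ S, i) = N)

lemma mem_Dall {N : ℕ} {S : Finset ℕ} :
    S ∈ Dall N ↔ 0 ∉ S ∧ (∑ i ∈ S, i) = N := by
  rw [Dall, mem_filter, mem_powerset]
  constructor
  · rintro ⟨hsub, hsum⟩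
    refine ⟨fun hc => ?_, hsum⟩
    have := (mem_Icc.mp (hsub hc)).1; omega
  · rintro ⟨h0, hsum⟩
    refine ⟨fun x hx => ?_, hsum⟩
    have h1 : 1 ≤ x := mem_pos h0 hx
    have h2 : x ≤ ∑ i ∈ S, i := Finset.single_le_sum (f := fun i => i)
      (fun i _ => Nat.zero_le i) hx
    rw [mem_Icc]; omega

lemma Dall_nonempty {N : ℕ} (hN : 1 ≤ N) {S : Finset ℕ} (hS : S ∈ Dall N) :
    S.Nonempty := by
  rw [nonempty_iff_ne_empty]
  rintro rfl
  have := (mem_Dall.mp hS).2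
  simp at this; omega

lemma phi_spec {S : Finset ℕ} (h : S.Nonempty) (h0 : 0 ∉ S) (hne : phi S ≠ S) :
    (∑ x ∈ phi S, x) = ∑ x ∈ S, x ∧ 0 ∉ phi S ∧
    phi (phi S) = S ∧ (-1 : ℤ) ^ S.card + (-1 : ℤ) ^ (phi S).card = 0 := by
  by_cases hc : S.min' h ≤ sg S h h0
  · have he : S.max' h + 1 ≠ 2 * S.min' h := fun he =>
      hne ((phi_fix_iff h h0).mpr (Or.inl ⟨hc, he⟩))
    obtain ⟨h1, h2, h3, h4, h5⟩ := caseA h h0 hc he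
    rw [h1]
    refine ⟨h2, h3, h5, ?_⟩
    rw [← h4, pow_succ]; ring
  · have he : S.max' h ≠ 2 * sg S h h0 := fun he =>
      hne ((phi_fix_iff h h0).mpr (Or.inr ⟨by omega, he⟩))
    obtain ⟨h1, h2, h3, h4, h5⟩ := caseB h h0 (by omega) he
    rw [h1]
    refine ⟨h2, h3, h5, ?_⟩
    rw [h4, pow_succ]; ring

lemma classify2 {N : ℕ} (hN : 1 ≤ N) {S : Finset ℕ}
    (hS : S ∈ (Dall N).filter (fun S => phi S = S)) :
    (∃ m, 1 ≤ m ∧ S = Finset.Icc m (2 * m - 1) ∧ S.card = m ∧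
      3 * m * m = 2 * N + m ∧ 2 * m ∉ S) ∨
    (∃ m, 1 ≤ m ∧ S = Finset.Icc (m + 1) (2 * m) ∧ S.card = m ∧
      3 * m * m + m = 2 * N ∧ 2 * m ∈ S) := by
  rw [mem_filter] at hS
  obtain ⟨hD, hfix⟩ := hS
  obtain ⟨h0, hsum⟩ := mem_Dall.mp hD
  have h : S.Nonempty := Dall_nonempty hN hD
  rcases fix_classify h h0 hfix with ⟨m, hm, hEq⟩ | ⟨m, hm, hEq⟩
  · refine Or.inl ⟨m, hm, hEq, ?_, ?_, ?_⟩
    · rw [hEq, Nat.card_Icc]; omega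
    · have hs2 := sumIcc m (2 * m - 1)
      rw [hEq] at hsum
      rw [hsum] at hs2
      have e1 : m + (2 * m - 1) = 3 * m - 1 := by omega
      have e2 : 2 * m - 1 + 1 - m = m := by omega
      rw [e1, e2] at hs2
      have e3 : (3 * m - 1) * m + m = 3 * m * m := by
        rw [Nat.sub_mul, one_mul]
        have : m ≤ 3 * m * m := by nlinarith
        omega
      omega
    · rw [hEq]; intro hc; have := mem_Icc.mp hc; omega
  · refine Or.inr ⟨m, hm, hEq, ?_, ?_, ?_⟩
    · rw [hEq, Nat.card_Icc]; omega
    · have hs2 := sumIcc (m + 1) (2 * m)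
      rw [hEq] at hsum
      rw [hsum] at hs2
      have e1 : m + 1 + 2 * m = 3 * m + 1 := by omega
      have e2 : 2 * m + 1 - (m + 1) = m := by omega
      rw [e1, e2] at hs2
      have e3 : (3 * m + 1) * m = 3 * m * m + m := by ring
      omega
    · rw [hEq, mem_Icc]; omega

lemma fixed_sum (N : ℕ) (hN : 1 ≤ N) :
    (∑ S ∈ (Dall N).filter (fun S => phi S = S), (-1 : ℤ) ^ S.card) =
      ∑ n ∈ (Finset.Icc (-(N : ℤ)) (N : ℤ)).filter (fun n => n * (3 * n + 1) = 2 * (N : ℤ)),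
        (n.negOnePow : ℤ) := by
  apply Finset.sum_nbij'
    (i := fun S => if 2 * S.card ∈ S then (S.card : ℤ) else -(S.card : ℤ))
    (j := fun n => if 0 ≤ n then Finset.Icc (n.toNat + 1) (2 * n.toNat)
      else Finset.Icc (-n).toNat (2 * (-n).toNat - 1))
  · -- hi
    intro S hS
    rcases classify2 hN hS with ⟨m, hm, hEq, hcard, hq, hmem⟩ | ⟨m, hm, hEq, hcard, hq, hmem⟩
    · rw [hcard, if_neg hmem, mem_filter, mem_Icc]
      have h3 : 3 * m * 1 ≤ 3 * m * m := Nat.mul_le_mul_left _ hm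
      have hmN : m ≤ N := by omega
      refine ⟨⟨by omega, by omega⟩, ?_⟩
      have hq' : 3 * (m : ℤ) * m = 2 * N + m := by exact_mod_cast hq
      linear_combination hq'
    · rw [hcard, if_pos hmem, mem_filter, mem_Icc]
      have h3 : 3 * m * 1 ≤ 3 * m * m := Nat.mul_le_mul_left _ hm
      have hmN : m ≤ N := by omega
      refine ⟨⟨by omega, by omega⟩, ?_⟩
      have hq' : 3 * (m : ℤ) * m + m = 2 * N := by exact_mod_cast hq
      linear_combination hq'
  · -- hj
    intro n hn
    rw [mem_filter, mem_Icc] at hn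
    obtain ⟨⟨hn1, hn2⟩, hq⟩ := hn
    have hn0 : n ≠ 0 := by rintro rfl; simp at hq; omega
    rcases le_or_gt 0 n with hpos | hneg
    · set m := n.toNat with hm
      have hmn : (m : ℤ) = n := Int.toNat_of_nonneg hpos
      have hm1 : 1 ≤ m := by omega
      have hqN : 3 * m * m + m = 2 * N := by
        have : (3 * (m : ℤ) * m + m : ℤ) = 2 * N := by rw [hmn]; linear_combination hq
        exact_mod_cast this
      rw [if_pos hpos, mem_filter]
      constructor
      · rw [mem_Dall]
        constructor
        · intro hc; have := (mem_Icc.mp hc).1; omega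
        · have hs2 := sumIcc (m + 1) (2 * m)
          have e1 : m + 1 + 2 * m = 3 * m + 1 := by omega
          have e2 : 2 * m + 1 - (m + 1) = m := by omega
          rw [e1, e2] at hs2
          have e3 : (3 * m + 1) * m = 3 * m * m + m := by ring
          omega
      · exact fixedB m hm1
    · set m := (-n).toNat with hm
      have hmn : (m : ℤ) = -n := Int.toNat_of_nonneg (by omega)
      have hm1 : 1 ≤ m := by omega
      have hqN : 3 * m * m = 2 * N + m := by
        have : (3 * (m : ℤ) * m : ℤ) = 2 * N + m := by rw [hmn]; linear_combination hq
        exact_mod_cast this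
      rw [if_neg (not_le.mpr hneg), mem_filter]
      constructor
      · rw [mem_Dall]
        constructor
        · intro hc; have := (mem_Icc.mp hc).1; omega
        · have hs2 := sumIcc m (2 * m - 1)
          have e1 : m + (2 * m - 1) = 3 * m - 1 := by omega
          have e2 : 2 * m - 1 + 1 - m = m := by omega
          rw [e1, e2] at hs2
          have e3 : (3 * m - 1) * m + m = 3 * m * m := by
            rw [Nat.sub_mul, one_mul]
            have : m ≤ 3 * m * m := by nlinarith
            omega
          omega
      · exact fixedA m hm1
  · -- left_inv
    intro S hS
    rcases classify2 hN hS with ⟨m, hm, hEq, hcard, hq, hmem⟩ | ⟨m, hm, hEq, hcard, hq, hmem⟩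
    · rw [hcard, if_neg hmem, if_neg (show ¬(0 ≤ -(m : ℤ)) by omega)]
      rw [show (-(-(m : ℤ))).toNat = m by omega]
      exact hEq.symm
    · rw [hcard, if_pos hmem, if_pos (show (0 : ℤ) ≤ (m : ℤ) by omega)]
      rw [show ((m : ℤ)).toNat = m by omega]
      exact hEq.symm
  · -- right_inv
    intro n hn
    rw [mem_filter, mem_Icc] at hn
    obtain ⟨⟨hn1, hn2⟩, hq⟩ := hn
    have hn0 : n ≠ 0 := by rintro rfl; simp at hq; omega
    rcases le_or_gt 0 n with hpos | hneg
    · set m := n.toNat with hm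
      have hmn : (m : ℤ) = n := Int.toNat_of_nonneg hpos
      have hm1 : 1 ≤ m := by omega
      rw [if_pos hpos]
      have hcard : (Finset.Icc (m + 1) (2 * m)).card = m := by rw [Nat.card_Icc]; omega
      rw [hcard, if_pos (mem_Icc.mpr ⟨by omega, by omega⟩)]
      exact hmn
    · set m := (-n).toNat with hm
      have hmn : (m : ℤ) = -n := Int.toNat_of_nonneg (by omega)
      have hm1 : 1 ≤ m := by omega
      rw [if_neg (not_le.mpr hneg)]
      have hcard : (Finset.Icc m (2 * m - 1)).card = m := by rw [Nat.card_Icc]; omega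
      rw [hcard, if_neg (by intro hc; have := mem_Icc.mp hc; omega)]
      omega
  · -- values
    intro S hS
    rcases classify2 hN hS with ⟨m, hm, hEq, hcard, hq, hmem⟩ | ⟨m, hm, hEq, hcard, hq, hmem⟩
    · rw [hcard, if_neg hmem, Int.negOnePow_neg, Int.coe_negOnePow_natCast]
    · rw [hcard, if_pos hmem, Int.coe_negOnePow_natCast]

end PNTaux



/-- Euler's pentagonal number theorem: `∏_{n≥1}(1-q^n) = ∑_{n ∈ ℤ} (-1)^n q^{n(3n+1)/2}`.
The `N`-th coefficient of the bilateral sum is `∑_{n ∈ ℤ, n(3n+1)/2 = N} (-1)^n`; all such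
`n` satisfy `|n| ≤ N`, so the sum may be taken over `Finset.Icc (-N) N`. -/
theorem statement4 :
    f 1 = PowerSeries.mk fun N =>
      ∑ n ∈ Finset.Icc (-(N : ℤ)) (N : ℤ),
        if n * (3 * n + 1) = 2 * (N : ℤ) then (n.negOnePow : ℤ) else 0 := by
  ext N
  rw [PowerSeries.coeff_mk, PNTaux.coeff_f1]
  rcases Nat.eq_zero_or_pos N with rfl | hN
  · have hL : ((Finset.Icc 1 (0 + 1)).powerset.filter
        (fun S => (∑ i ∈ S, i) = 0)) = {(∅ : Finset ℕ)} := by decide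
    rw [hL, Finset.sum_singleton]
    norm_num
  · have key := PNTaux.fixed_sum N hN
    rw [show ((Finset.Icc 1 (N + 1)).powerset.filter (fun S => (∑ i ∈ S, i) = N)) =
      PNTaux.Dall N from rfl]
    rw [← Finset.sum_filter_add_sum_filter_not (PNTaux.Dall N) (fun S => PNTaux.phi S = S)]
    have hzero : (∑ S ∈ (PNTaux.Dall N).filter (fun S => ¬ PNTaux.phi S = S),
        (-1 : ℤ) ^ S.card) = 0 := by
      apply Finset.sum_involution (g := fun S _ => PNTaux.phi S)
      · intro S ha
        rw [Finset.mem_filter] at ha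
        obtain ⟨hD, hne⟩ := ha
        obtain ⟨h0, hsum⟩ := PNTaux.mem_Dall.mp hD
        obtain ⟨_, _, _, hsign⟩ := PNTaux.phi_spec (PNTaux.Dall_nonempty hN hD) h0 hne
        exact hsign
      · intro S ha _
        rw [Finset.mem_filter] at ha
        exact ha.2
      · intro S ha
        rw [Finset.mem_filter] at ha ⊢
        obtain ⟨hD, hne⟩ := ha
        obtain ⟨h0, hsum⟩ := PNTaux.mem_Dall.mp hD
        obtain ⟨hsum', h0', hinv, _⟩ := PNTaux.phi_spec (PNTaux.Dall_nonempty hN hD) h0 hne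
        refine ⟨PNTaux.mem_Dall.mpr ⟨h0', by rw [hsum']; exact hsum⟩, ?_⟩
        rw [hinv]
        exact fun hc => hne hc.symm
      · intro S ha
        rw [Finset.mem_filter] at ha
        obtain ⟨hD, hne⟩ := ha
        obtain ⟨h0, hsum⟩ := PNTaux.mem_Dall.mp hD
        exact (PNTaux.phi_spec (PNTaux.Dall_nonempty hN hD) h0 hne).2.2.1
    rw [hzero, add_zero, key, Finset.sum_filter]
end

section
/- Let p ≡ 5 or 7 (mod 8) be prime and 0 ≤ l ≤ p-1 with p | 8l+3. If integers m, n satisfy 3m^2 + 2m + n(3n+1)/2 ≡ l (mod p), then p | (3m+1) and p | (6n+1). -/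
theorem statement15 (p : ℕ) (hp : p.Prime) (hp8 : p % 8 = 5 ∨ p % 8 = 7)
    (l : ℕ) (hl : l ≤ p - 1) (hdl : p ∣ 8 * l + 3)
    (m n : ℤ)
    (h : (p : ℤ) ∣ (3 * m ^ 2 + 2 * m + n * (3 * n + 1) / 2 - (l : ℤ))) :
    (p : ℤ) ∣ 3 * m + 1 ∧ (p : ℤ) ∣ 6 * n + 1 := by
  haveI : Fact p.Prime := ⟨hp⟩
  have hp2 : p ≠ 2 := by rintro rfl; omega
  -- n*(3n+1) is even
  have h2 : (2:ℤ) ∣ n * (3 * n + 1) := by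
    rcases Int.even_or_odd n with ⟨k, hk⟩ | ⟨k, hk⟩
    · exact ⟨k * (3 * n + 1), by rw [hk]; ring⟩
    · exact ⟨n * (3 * k + 2), by rw [hk]; ring⟩
  have ht : 2 * (n * (3 * n + 1) / 2) = n * (3 * n + 1) := Int.mul_ediv_cancel' h2
  have hdl' : (p : ℤ) ∣ 8 * (l : ℤ) + 3 := by
    have := Int.natCast_dvd_natCast.mpr hdl
    push_cast at this
    exact this
  obtain ⟨c, hc⟩ := h
  obtain ⟨d, hd⟩ := hdl'
  have key : (p : ℤ) ∣ 8 * (3 * m + 1) ^ 2 + (6 * n + 1) ^ 2 :=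
    ⟨24 * c + 3 * d, by linear_combination 24 * hc + 3 * hd - 12 * ht⟩
  set a : ZMod p := ((3 * m + 1 : ℤ) : ZMod p) with ha_def
  set b : ZMod p := ((6 * n + 1 : ℤ) : ZMod p) with hb_def
  have hz : 8 * a ^ 2 + b ^ 2 = 0 := by
    have := (ZMod.intCast_zmod_eq_zero_iff_dvd _ p).mpr key
    rw [ha_def, hb_def]
    push_cast at this ⊢
    linear_combination this
  have h2z : (2 : ZMod p) ≠ 0 := by
    intro h0
    have hpd : p ∣ 2 := (ZMod.natCast_eq_zero_iff 2 p).mp (by exact_mod_cast h0)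
    exact hp2 ((Nat.prime_dvd_prime_iff_eq hp Nat.prime_two).mp hpd)
  have hns : ¬ IsSquare (-2 : ZMod p) := by
    rw [ZMod.exists_sq_eq_neg_two_iff hp2]
    omega
  have ha : a = 0 := by
    by_contra hne
    apply hns
    refine ⟨b * (2 * a)⁻¹, ?_⟩
    have h2a : (2 * a) ≠ 0 := mul_ne_zero h2z hne
    field_simp
    linear_combination -hz
  have hb : b = 0 := by
    have : b ^ 2 = 0 := by linear_combination hz - 8 * (ha ▸ rfl : a ^ 2 = 0 ^ 2)
    exact pow_eq_zero_iff (n := 2) (by norm_num) |>.mp this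
  constructor
  · exact (ZMod.intCast_zmod_eq_zero_iff_dvd _ p).mp ha
  · exact (ZMod.intCast_zmod_eq_zero_iff_dvd _ p).mp hb
end
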